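/- arXiv:2405.09727 — 5 statements merged into one kernel-verified Lean document; each statement's English description precedes it below -/
import Mathlib

section
/- Let G be a hypergraph and let G_1, G_2 be section hypergraphs of G such that G_1 ∪ G_2 = G and G_1 ∩ G_2 is a complete hypergraph. Then the multilinear set S(G) is decomposable into S(G_1) and S(G_2); that is, the multilinear polytope MP(G) equals the set of points z (in the coordinates of G) whose restriction to the coordinates of G_1 lies in MP(G_1) and whose restriction to the coordinates of G_2 lies in MP(G_2). -/
open Finset

/-- The multilinear set of the hypergraph with node set `Vset` and edge set `E`. -/
def MultilinearSet {V : Type} [DecidableEq V] (Vset : Finset V) (E : Finset (Finset V)) :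
    Set (Finset V → ℝ) :=
  {z | ∃ x : V → ℝ, (∀ v ∈ Vset, x v = 0 ∨ x v = 1) ∧ (∀ v ∈ Vset, z {v} = x v) ∧
        ∀ e ∈ E, z e = ∏ v ∈ e, x v}

section Aux

variable {V : Type} [DecidableEq V]

/-- A point has a good representation if it is a finite convex combination of binary
assignments, coordinate-wise on the constrained coordinates. -/
def GoodRep (Vset : Finset V) (E : Finset (Finset V)) (z : Finset V → ℝ) : Prop :=
  ∃ (n : ℕ) (l : Fin n → ℝ) (x : Fin n → V → ℝ),
    (∀ i, 0 ≤ l i) ∧ (∑ i, l i = 1) ∧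
    (∀ i, ∀ v ∈ Vset, x i v = 0 ∨ x i v = 1) ∧
    (∀ v ∈ Vset, z {v} = ∑ i, l i * x i v) ∧
    (∀ e ∈ E, z e = ∑ i, l i * ∏ v ∈ e, x i v)

lemma goodRep_of_fintype {Vset : Finset V} {E : Finset (Finset V)} {z : Finset V → ℝ}
    {ι : Type} [Fintype ι] (l : ι → ℝ) (x : ι → V → ℝ)
    (h0 : ∀ i, 0 ≤ l i) (h1 : ∑ i, l i = 1)
    (hb : ∀ i, ∀ v ∈ Vset, x i v = 0 ∨ x i v = 1)
    (hz1 : ∀ v ∈ Vset, z {v} = ∑ i, l i * x i v)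
    (hze : ∀ e ∈ E, z e = ∑ i, l i * ∏ v ∈ e, x i v) : GoodRep Vset E z := by
  have e := Fintype.equivFin ι
  refine ⟨Fintype.card ι, fun i => l (e.symm i), fun i => x (e.symm i),
    fun i => h0 _, ?_, fun i => hb _, ?_, ?_⟩
  · rw [← h1]; exact Equiv.sum_comp e.symm l
  · intro v hv; rw [hz1 v hv]; exact (Equiv.sum_comp e.symm _).symm
  · intro e' he'; rw [hze e' he']; exact (Equiv.sum_comp e.symm _).symm

lemma hull_eq (W : Finset V) (F : Finset (Finset V)) :
    convexHull ℝ (MultilinearSet W F) = {z | GoodRep W F z} := by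
  classical
  apply Set.Subset.antisymm
  · apply convexHull_min
    · rintro z ⟨x, hb, h1, he⟩
      exact ⟨1, fun _ => 1, fun _ => x, fun _ => zero_le_one, by simp, fun _ => hb,
        fun v hv => by simp [h1 v hv], fun e' he' => by simp [he e' he']⟩
    · intro z1 hz1 z2 hz2 a b ha hb hab
      obtain ⟨n, l, x, l0, ls, lb, lz1, lze⟩ := hz1
      obtain ⟨m, q, y, q0, qs, qb, qz1, qze⟩ := hz2
      refine goodRep_of_fintype (ι := Fin n ⊕ Fin m)
        (Sum.elim (fun i => a * l i) (fun j => b * q j)) (Sum.elim x y) ?_ ?_ ?_ ?_ ?_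
      · rintro (i | j)
        · exact mul_nonneg ha (l0 i)
        · exact mul_nonneg hb (q0 j)
      · rw [Fintype.sum_sum_type]
        simp only [Sum.elim_inl, Sum.elim_inr, ← mul_sum, ls, qs, mul_one, hab]
      · rintro (i | j) v hv
        · exact lb i v hv
        · exact qb j v hv
      · intro v hv
        rw [Fintype.sum_sum_type]
        simp only [Sum.elim_inl, Sum.elim_inr, Pi.add_apply, Pi.smul_apply, smul_eq_mul]
        rw [lz1 v hv, qz1 v hv, mul_sum, mul_sum]
        congr 1 <;> exact sum_congr rfl fun i _ => by ring
      · intro e' he'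
        rw [Fintype.sum_sum_type]
        simp only [Sum.elim_inl, Sum.elim_inr, Pi.add_apply, Pi.smul_apply, smul_eq_mul]
        rw [lze e' he', qze e' he', mul_sum, mul_sum]
        congr 1 <;> exact sum_congr rfl fun i _ => by ring
  · rintro z ⟨n, l, x, l0, ls, lb, lz1, lze⟩
    set ζ : Fin n → (Finset V → ℝ) := fun i s =>
      if s ∈ F ∨ (s ⊆ W ∧ s.card = 1) then ∏ v ∈ s, x i v else z s with hζ
    have hmem : ∀ i, ζ i ∈ MultilinearSet W F := by
      intro i
      refine ⟨x i, lb i, ?_, ?_⟩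
      · intro v hv
        have hc : ({v} : Finset V) ∈ F ∨ (({v} : Finset V) ⊆ W ∧ ({v} : Finset V).card = 1) :=
          Or.inr ⟨by simpa using hv, card_singleton v⟩
        show (if _ then _ else _) = _
        rw [if_pos hc, prod_singleton]
      · intro e' he'
        show (if _ then _ else _) = _
        rw [if_pos (Or.inl he')]
    have hz : z = Finset.centerMass univ l ζ := by
      rw [Finset.centerMass, ls, inv_one, one_smul]
      funext s
      rw [Finset.sum_apply]
      by_cases hc : s ∈ F ∨ (s ⊆ W ∧ s.card = 1)
      · rcases hc with hc | ⟨hsW, hs1⟩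
        · rw [lze s hc]
          refine sum_congr rfl fun i _ => ?_
          simp only [Pi.smul_apply, smul_eq_mul, hζ]
          rw [if_pos (Or.inl hc)]
        · obtain ⟨v, rfl⟩ := card_eq_one.mp hs1
          have hv : v ∈ W := by simpa using hsW
          rw [lz1 v hv]
          refine sum_congr rfl fun i _ => ?_
          have hc : ({v} : Finset V) ∈ F ∨ (({v} : Finset V) ⊆ W ∧ ({v} : Finset V).card = 1) :=
            Or.inr ⟨hsW, hs1⟩
          simp only [Pi.smul_apply, smul_eq_mul, hζ]
          rw [if_pos hc, prod_singleton]
      · have h1 : ∀ i ∈ univ, (l i • ζ i) s = l i * z s := fun i _ => by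
          simp only [Pi.smul_apply, smul_eq_mul, hζ]
          rw [if_neg hc]
        rw [sum_congr rfl h1, ← sum_mul, ls, one_mul]
    rw [hz]
    exact centerMass_mem_convexHull univ (fun i _ => l0 i) (by rw [ls]; norm_num)
      (fun i _ => hmem i)

/-- Möbius-inversion marginal lemma: the total weight of the representation terms realizing
a given 0/1 pattern `S` on `VI` is determined by the values of `z` on nonempty subsets of `VI`. -/
lemma marginal {n : ℕ} (VI : Finset V) (z : Finset V → ℝ)
    (l : Fin n → ℝ) (x : Fin n → V → ℝ)
    (hsum : ∑ i, l i = 1)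
    (hbin : ∀ i, ∀ v ∈ VI, x i v = 0 ∨ x i v = 1)
    (hze : ∀ e : Finset V, e ⊆ VI → e.Nonempty → z e = ∑ i, l i * ∏ v ∈ e, x i v)
    (S : Finset V) (hS : S ⊆ VI) :
    ∑ i ∈ univ.filter (fun i => VI.filter (fun v => x i v = 1) = S), l i
      = ∑ T ∈ (VI \ S).powerset,
          (-1 : ℝ) ^ T.card * (if S ∪ T = (∅ : Finset V) then 1 else z (S ∪ T)) := by
  classical
  have key : ∀ T ∈ (VI \ S).powerset,
      (-1 : ℝ) ^ T.card * (if S ∪ T = (∅ : Finset V) then 1 else z (S ∪ T))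
        = ∑ i, l i * ((-1 : ℝ) ^ T.card * ∏ v ∈ S ∪ T, x i v) := by
    intro T hT
    by_cases h : S ∪ T = (∅ : Finset V)
    · rw [if_pos h]
      obtain ⟨hS0, hT0⟩ := union_eq_empty.mp h
      subst hT0
      simp [hS0, hsum]
    · rw [if_neg h,
        hze (S ∪ T) (union_subset hS ((mem_powerset.mp hT).trans sdiff_subset))
          (nonempty_iff_ne_empty.mpr h), mul_sum]
      exact sum_congr rfl fun i _ => by ring
  have step1 : ∑ T ∈ (VI \ S).powerset,
      (-1 : ℝ) ^ T.card * (if S ∪ T = (∅ : Finset V) then 1 else z (S ∪ T))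
      = ∑ i, l i * ((∏ v ∈ S, x i v) * ∏ v ∈ VI \ S, (1 - x i v)) := by
    rw [sum_congr rfl key, sum_comm]
    refine sum_congr rfl fun i _ => ?_
    rw [← mul_sum]
    congr 1
    have expand : ∏ v ∈ VI \ S, (1 - x i v)
        = ∑ T ∈ (VI \ S).powerset, (-1 : ℝ) ^ T.card * ∏ v ∈ T, x i v := by
      calc ∏ v ∈ VI \ S, (1 - x i v) = ∏ v ∈ VI \ S, (-x i v + 1) :=
            prod_congr rfl (fun v _ => by ring)
        _ = ∑ T ∈ (VI \ S).powerset, (∏ v ∈ T, -x i v) * ∏ v ∈ (VI \ S) \ T, (1 : ℝ) :=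
            prod_add _ _ _
        _ = _ := by
            refine sum_congr rfl fun T hT => ?_
            rw [prod_const_one, mul_one]
            have h1 : ∀ v ∈ T, -x i v = (-1 : ℝ) * x i v := fun v _ => by ring
            rw [prod_congr rfl h1, prod_mul_distrib, prod_const]
    rw [expand, mul_sum]
    refine sum_congr rfl fun T hT => ?_
    have hdisj : Disjoint S T := Finset.disjoint_left.mpr fun v hvS hvT =>
      (Finset.mem_sdiff.mp (mem_powerset.mp hT hvT)).2 hvS
    rw [prod_union hdisj]
    ring
  have hi : ∀ i, (∏ v ∈ S, x i v) * ∏ v ∈ VI \ S, (1 - x i v)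
      = if VI.filter (fun v => x i v = 1) = S then 1 else 0 := by
    intro i
    by_cases h : VI.filter (fun v => x i v = 1) = S
    · rw [if_pos h]
      have h1 : ∀ v ∈ S, x i v = 1 := by
        intro v hv
        rw [← h] at hv
        exact (mem_filter.mp hv).2
      have h0 : ∀ v ∈ VI \ S, (1 : ℝ) - x i v = 1 := by
        intro v hv
        obtain ⟨hvVI, hvS⟩ := mem_sdiff.mp hv
        rcases hbin i v hvVI with h' | h'
        · rw [h']; ring
        · have : v ∈ S := by rw [← h]; exact mem_filter.mpr ⟨hvVI, h'⟩
          exact absurd this hvS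
      rw [prod_eq_one h1, prod_eq_one h0, one_mul]
    · rw [if_neg h]
      obtain ⟨v, hv⟩ := not_forall.mp (fun hall => h (Finset.ext hall))
      rcases not_iff.mp hv with hiff
      by_cases hvS : v ∈ S
      · have hnf : v ∉ VI.filter (fun v => x i v = 1) := hiff.mpr hvS
        have hvVI : v ∈ VI := hS hvS
        have hx0 : x i v = 0 := by
          rcases hbin i v hvVI with h' | h'
          · exact h'
          · exact absurd (mem_filter.mpr ⟨hvVI, h'⟩) hnf
        rw [prod_eq_zero hvS hx0, zero_mul]
      · have hf : v ∈ VI.filter (fun v => x i v = 1) := by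
          by_contra hnf
          exact hvS (hiff.mp hnf)
        obtain ⟨hvVI, hx1⟩ := mem_filter.mp hf
        have : (1 : ℝ) - x i v = 0 := by rw [hx1]; ring
        rw [prod_eq_zero (mem_sdiff.mpr ⟨hvVI, hvS⟩) this, mul_zero]
  rw [step1]
  have hrw : ∀ i ∈ (univ : Finset (Fin n)),
      l i * ((∏ v ∈ S, x i v) * ∏ v ∈ VI \ S, (1 - x i v))
        = l i * (if VI.filter (fun v => x i v = 1) = S then 1 else 0) := fun i _ => by
    rw [hi i]
  rw [sum_congr rfl hrw, sum_filter]
  refine sum_congr rfl fun i _ => ?_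
  by_cases h : VI.filter (fun v => x i v = 1) = S <;> simp [h]

lemma coupling (V1 V2 : Finset V) (E : Finset (Finset V)) (z : Finset V → ℝ)
    (hEunion : (E.filter fun e => e ⊆ V1) ∪ (E.filter fun e => e ⊆ V2) = E)
    (hcomplete : ∀ e : Finset V, e ⊆ V1 ∩ V2 → 2 ≤ e.card → e ∈ E)
    (h1 : GoodRep V1 (E.filter fun e => e ⊆ V1) z)
    (h2 : GoodRep V2 (E.filter fun e => e ⊆ V2) z) :
    GoodRep (V1 ∪ V2) E z := by
  classical
  obtain ⟨n, l, x, l0, ls, lb, lz1, lze⟩ := h1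
  obtain ⟨m, q, y, q0, qs, qb, qz1, qze⟩ := h2
  set VI := V1 ∩ V2 with hVIdef
  have hzeVI1 : ∀ e : Finset V, e ⊆ VI → e.Nonempty → z e = ∑ i, l i * ∏ v ∈ e, x i v := by
    intro e he hne
    rcases Nat.lt_or_ge e.card 2 with h2c | h2c
    · have hc1 : e.card = 1 := le_antisymm (by omega) hne.card_pos
      obtain ⟨v, rfl⟩ := card_eq_one.mp hc1
      have hv : v ∈ V1 := inter_subset_left (he (mem_singleton_self v))
      simpa using lz1 v hv
    · exact lze e (mem_filter.mpr ⟨hcomplete e he h2c, he.trans inter_subset_left⟩)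
  have hzeVI2 : ∀ e : Finset V, e ⊆ VI → e.Nonempty → z e = ∑ j, q j * ∏ v ∈ e, y j v := by
    intro e he hne
    rcases Nat.lt_or_ge e.card 2 with h2c | h2c
    · have hc1 : e.card = 1 := le_antisymm (by omega) hne.card_pos
      obtain ⟨v, rfl⟩ := card_eq_one.mp hc1
      have hv : v ∈ V2 := inter_subset_right (he (mem_singleton_self v))
      simpa using qz1 v hv
    · exact qze e (mem_filter.mpr ⟨hcomplete e he h2c, he.trans inter_subset_right⟩)
  set S1 : Fin n → Finset V := fun i => VI.filter (fun v => x i v = 1) with hS1def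
  set S2 : Fin m → Finset V := fun j => VI.filter (fun v => y j v = 1) with hS2def
  set w : Finset V → ℝ := fun S => ∑ T ∈ (VI \ S).powerset,
      (-1 : ℝ) ^ T.card * (if S ∪ T = (∅ : Finset V) then 1 else z (S ∪ T)) with hwdef
  have hw1 : ∀ S ⊆ VI, ∑ i ∈ univ.filter (fun i => S1 i = S), l i = w S := fun S hS =>
    marginal VI z l x ls (fun i v hv => lb i v (inter_subset_left hv)) hzeVI1 S hS
  have hw2 : ∀ S ⊆ VI, ∑ j ∈ univ.filter (fun j => S2 j = S), q j = w S := fun S hS =>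
    marginal VI z q y qs (fun j v hv => qb j v (inter_subset_right hv)) hzeVI2 S hS
  have hS1sub : ∀ i, S1 i ⊆ VI := fun i => filter_subset _ _
  have hS2sub : ∀ j, S2 j ⊆ VI := fun j => filter_subset _ _
  have hlw : ∀ i, l i ≤ w (S1 i) := by
    intro i
    rw [← hw1 (S1 i) (hS1sub i)]
    exact single_le_sum (fun i' _ => l0 i') (mem_filter.mpr ⟨mem_univ i, rfl⟩)
  have hqw : ∀ j, q j ≤ w (S2 j) := by
    intro j
    rw [← hw2 (S2 j) (hS2sub j)]
    exact single_le_sum (fun j' _ => q0 j') (mem_filter.mpr ⟨mem_univ j, rfl⟩)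
  have hagree : ∀ i j, S1 i = S2 j → ∀ v ∈ VI, x i v = y j v := by
    intro i j hij v hv
    have hx := lb i v (inter_subset_left hv)
    have hy := qb j v (inter_subset_right hv)
    rcases hx with hx | hx <;> rcases hy with hy | hy
    · rw [hx, hy]
    · exfalso
      have hmem : v ∈ S1 i := by rw [hij, hS2def]; exact mem_filter.mpr ⟨hv, hy⟩
      rw [hS1def] at hmem
      exact absurd (mem_filter.mp hmem).2 (by rw [hx]; norm_num)
    · exfalso
      have hmem : v ∈ S2 j := by rw [← hij, hS1def]; exact mem_filter.mpr ⟨hv, hx⟩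
      rw [hS2def] at hmem
      exact absurd (mem_filter.mp hmem).2 (by rw [hy]; norm_num)
    · rw [hx, hy]
  set ν : Fin n × Fin m → ℝ :=
    fun p => if S1 p.1 = S2 p.2 then l p.1 * q p.2 / w (S1 p.1) else 0 with hνdef
  have ν0 : ∀ p, 0 ≤ ν p := by
    intro p
    rw [hνdef]
    dsimp only
    split
    · exact div_nonneg (mul_nonneg (l0 _) (q0 _)) (le_trans (l0 _) (hlw _))
    · exact le_refl 0
  have key1 : ∀ i, ∑ j, ν (i, j) = l i := by
    intro i
    have hc : ∀ j, ν (i, j) = (if S2 j = S1 i then (l i / w (S1 i)) * q j else 0) := by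
      intro j
      rw [hνdef]
      dsimp only
      by_cases h : S1 i = S2 j
      · rw [if_pos h, if_pos h.symm]; ring
      · rw [if_neg h, if_neg (fun h' => h h'.symm)]
    rw [sum_congr rfl fun j _ => hc j, ← sum_filter, ← mul_sum, hw2 (S1 i) (hS1sub i)]
    rcases eq_or_lt_of_le (l0 i) with h0 | h0
    · rw [← h0]; simp
    · have hwpos : 0 < w (S1 i) := lt_of_lt_of_le h0 (hlw i)
      field_simp
  have key2 : ∀ j, ∑ i, ν (i, j) = q j := by
    intro j
    have hc : ∀ i, ν (i, j) = (if S1 i = S2 j then (q j / w (S2 j)) * l i else 0) := by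
      intro i
      rw [hνdef]
      dsimp only
      by_cases h : S1 i = S2 j
      · rw [if_pos h, if_pos h, h]; ring
      · rw [if_neg h, if_neg h]
    rw [sum_congr rfl fun i _ => hc i, ← sum_filter, ← mul_sum, hw1 (S2 j) (hS2sub j)]
    rcases eq_or_lt_of_le (q0 j) with h0 | h0
    · rw [← h0]; simp
    · have hwpos : 0 < w (S2 j) := lt_of_lt_of_le h0 (hqw j)
      field_simp
  refine goodRep_of_fintype (ι := Fin n × Fin m) ν
    (fun p => fun v => if v ∈ V1 then x p.1 v else y p.2 v) ν0 ?_ ?_ ?_ ?_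
  · rw [Fintype.sum_prod_type, sum_congr rfl fun i _ => key1 i]
    exact ls
  · rintro p v hv
    by_cases h : v ∈ V1
    · simpa [h] using lb p.1 v h
    · have hv2 : v ∈ V2 := by
        rcases mem_union.mp hv with h' | h'
        · exact absurd h' h
        · exact h'
      simpa [h] using qb p.2 v hv2
  · intro v hv
    by_cases h : v ∈ V1
    · calc z {v} = ∑ i, l i * x i v := lz1 v h
        _ = ∑ i, (∑ j, ν (i, j)) * x i v := by
              refine sum_congr rfl fun i _ => ?_
              rw [key1 i]
        _ = ∑ p : Fin n × Fin m, ν p * x p.1 v := by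
              rw [Fintype.sum_prod_type]
              refine sum_congr rfl fun i _ => ?_
              rw [sum_mul]
        _ = ∑ p : Fin n × Fin m, ν p * (if v ∈ V1 then x p.1 v else y p.2 v) :=
              sum_congr rfl fun p _ => by rw [if_pos h]
    · have hv2 : v ∈ V2 := by
        rcases mem_union.mp hv with h' | h'
        · exact absurd h' h
        · exact h'
      calc z {v} = ∑ j, q j * y j v := qz1 v hv2
        _ = ∑ j, (∑ i, ν (i, j)) * y j v := by
              refine sum_congr rfl fun j _ => ?_
              rw [key2 j]
        _ = ∑ p : Fin n × Fin m, ν p * y p.2 v := by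
              rw [Fintype.sum_prod_type_right]
              refine sum_congr rfl fun j _ => ?_
              rw [sum_mul]
        _ = ∑ p : Fin n × Fin m, ν p * (if v ∈ V1 then x p.1 v else y p.2 v) :=
              sum_congr rfl fun p _ => by rw [if_neg h]
  · intro e he
    have heu : e ∈ (E.filter fun e => e ⊆ V1) ∪ (E.filter fun e => e ⊆ V2) := by
      rw [hEunion]; exact he
    rcases mem_union.mp heu with h1e | h2e
    · have heV1 : e ⊆ V1 := (mem_filter.mp h1e).2
      calc z e = ∑ i, l i * ∏ v ∈ e, x i v := lze e h1e
        _ = ∑ i, (∑ j, ν (i, j)) * ∏ v ∈ e, x i v := by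
              refine sum_congr rfl fun i _ => ?_
              rw [key1 i]
        _ = ∑ p : Fin n × Fin m, ν p * ∏ v ∈ e, x p.1 v := by
              rw [Fintype.sum_prod_type]
              refine sum_congr rfl fun i _ => ?_
              rw [sum_mul]
        _ = ∑ p : Fin n × Fin m, ν p * ∏ v ∈ e, (if v ∈ V1 then x p.1 v else y p.2 v) := by
              refine sum_congr rfl fun p _ => ?_
              congr 1
              exact (prod_congr rfl fun v hv => if_pos (heV1 hv)).symm
    · have heV2 : e ⊆ V2 := (mem_filter.mp h2e).2
      have hgv : ∀ p : Fin n × Fin m,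
          ν p * ∏ v ∈ e, (if v ∈ V1 then x p.1 v else y p.2 v) = ν p * ∏ v ∈ e, y p.2 v := by
        intro p
        by_cases hp : S1 p.1 = S2 p.2
        · congr 1
          refine prod_congr rfl fun v hv => ?_
          by_cases hvV1 : v ∈ V1
          · rw [if_pos hvV1]
            exact hagree p.1 p.2 hp v (mem_inter.mpr ⟨hvV1, heV2 hv⟩)
          · rw [if_neg hvV1]
        · have hz0 : ν p = 0 := by rw [hνdef]; exact if_neg hp
          rw [hz0, zero_mul, zero_mul]
      calc z e = ∑ j, q j * ∏ v ∈ e, y j v := qze e h2e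
        _ = ∑ j, (∑ i, ν (i, j)) * ∏ v ∈ e, y j v := by
              refine sum_congr rfl fun j _ => ?_
              rw [key2 j]
        _ = ∑ p : Fin n × Fin m, ν p * ∏ v ∈ e, y p.2 v := by
              rw [Fintype.sum_prod_type_right]
              refine sum_congr rfl fun j _ => ?_
              rw [sum_mul]
        _ = ∑ p : Fin n × Fin m, ν p * ∏ v ∈ e, (if v ∈ V1 then x p.1 v else y p.2 v) :=
              sum_congr rfl fun p _ => (hgv p).symm

end Aux

/-- if `G₁`, `G₂` are section hypergraphs of `G` (induced by `V₁` and `V₂`) with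
`G₁ ∪ G₂ = G` and `G₁ ∩ G₂` a complete hypergraph, then the multilinear polytope of `G` is
exactly the set of points whose restriction to the coordinates of `G₁` lies in `MP(G₁)` and
whose restriction to the coordinates of `G₂` lies in `MP(G₂)`. -/
theorem multilinear_polytope_decomposition {V : Type} [Fintype V] [DecidableEq V]
    (Vset V1 V2 : Finset V) (E : Finset (Finset V))
    (hcard : ∀ e ∈ E, 2 ≤ e.card) (hsub : ∀ e ∈ E, e ⊆ Vset)
    (hV1 : V1 ⊆ Vset) (hV2 : V2 ⊆ Vset)
    (hVunion : V1 ∪ V2 = Vset)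
    (hEunion : (E.filter fun e => e ⊆ V1) ∪ (E.filter fun e => e ⊆ V2) = E)
    (hcomplete : ∀ e : Finset V, e ⊆ V1 ∩ V2 → 2 ≤ e.card → e ∈ E) :
    convexHull ℝ (MultilinearSet Vset E) =
      convexHull ℝ (MultilinearSet V1 (E.filter fun e => e ⊆ V1)) ∩
        convexHull ℝ (MultilinearSet V2 (E.filter fun e => e ⊆ V2)) := by
  classical
  rw [hull_eq, hull_eq, hull_eq]
  ext zpt
  simp only [Set.mem_inter_iff, Set.mem_setOf_eq]
  constructor
  · rintro ⟨n, l, x, l0, ls, lb, lz1, lze⟩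
    constructor
    · exact ⟨n, l, x, l0, ls, fun i v hv => lb i v (hV1 hv), fun v hv => lz1 v (hV1 hv),
        fun e he => lze e (mem_filter.mp he).1⟩
    · exact ⟨n, l, x, l0, ls, fun i v hv => lb i v (hV2 hv), fun v hv => lz1 v (hV2 hv),
        fun e he => lze e (mem_filter.mp he).1⟩
  · rintro ⟨hg1, hg2⟩
    have hc := coupling V1 V2 E zpt hEunion hcomplete hg1 hg2
    rwa [hVunion] at hc
end

section
/- Let 𝒞 be the set of maximal cliques of a binary undirected graphical model and let G = ∪_{C∈𝒞} G_C be the corresponding UGM hypergraph, where G_C is the complete hypergraph with node set C. If the family 𝒞 has the running intersection property, then the clique relaxation equals the multilinear polytope: MP^{cl}(G) = MP(G). -/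
open Finset

/-- The edge set of the UGM hypergraph of a clique family `𝒞`. -/
def ugmEdges {V : Type} [DecidableEq V] (𝒞 : Finset (Finset V)) : Finset (Finset V) :=
  𝒞.biUnion fun C => C.powerset.filter fun e => 2 ≤ e.card

/-- A finite family of sets has the running intersection property if it admits an ordering
`p 0, …, p (m-1)` such that for each `k ≥ 1` there is `j < k` with
`p k ∩ (∪_{i < k} p i) ⊆ p j`. -/
def HasRIP {α : Type} [DecidableEq α] (F : Finset (Finset α)) : Prop :=
  ∃ (m : ℕ) (p : Fin m → Finset α),
    (∀ i, p i ∈ F) ∧ (∀ C ∈ F, ∃ i, p i = C) ∧ Function.Injective p ∧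
      ∀ k : Fin m, (0 : ℕ) < (k : ℕ) →
        ∃ j : Fin m, j < k ∧
          p k ∩ (Finset.univ.filter fun i : Fin m => i < k).biUnion p ⊆ p j

section Aux
variable {V : Type} [DecidableEq V]

lemma prod_ind01 (S T : Finset V) :
    (∏ v ∈ S, (if v ∈ T then (1:ℝ) else 0)) = if S ⊆ T then 1 else 0 := by
  induction S using Finset.induction with
  | empty => simp
  | insert a s hx ih =>
    rw [Finset.prod_insert hx, ih]
    by_cases h1 : a ∈ T <;> by_cases h2 : s ⊆ T <;> simp [h1, h2, Finset.insert_subset_iff]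

/-- moment of `μ` (distribution over subsets of `U`) at set `S`. -/
def mom (U : Finset V) (μ : Finset V → ℝ) (S : Finset V) : ℝ :=
  ∑ T ∈ U.powerset, if S ⊆ T then μ T else 0

/-- marginal on `Ssep` of `μ` (distribution over subsets of `U`). -/
def marg (U Ssep : Finset V) (μ : Finset V → ℝ) (R : Finset V) : ℝ :=
  ∑ T ∈ U.powerset, if T ∩ Ssep = R then μ T else 0

lemma mom_empty (U : Finset V) (μ : Finset V → ℝ) :
    mom U μ ∅ = ∑ T ∈ U.powerset, μ T := by
  simp [mom]

lemma marg_nonneg (U Ssep : Finset V) (μ : Finset V → ℝ) (h : ∀ T, 0 ≤ μ T) (R : Finset V) :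
    0 ≤ marg U Ssep μ R := by
  refine Finset.sum_nonneg fun T _ => ?_
  by_cases hT : T ∩ Ssep = R <;> simp [hT, h T]

lemma marg_zero (U Ssep : Finset V) (μ : Finset V → ℝ) (h : ∀ T, 0 ≤ μ T) (A : Finset V)
    (hA : A ⊆ U) (hz : marg U Ssep μ (A ∩ Ssep) = 0) : μ A = 0 := by
  have h0 : ∀ T ∈ U.powerset, (0:ℝ) ≤ if T ∩ Ssep = A ∩ Ssep then μ T else 0 := by
    intro T _; by_cases hT : T ∩ Ssep = A ∩ Ssep <;> simp [hT, h T]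
  have := (Finset.sum_eq_zero_iff_of_nonneg h0).mp hz A (Finset.mem_powerset.mpr hA)
  simpa using this

lemma sum_union_reindex (U X : Finset V) (hd : Disjoint U X) (f : Finset V → ℝ) :
    ∑ T ∈ (U ∪ X).powerset, f T = ∑ A ∈ U.powerset, ∑ D ∈ X.powerset, f (A ∪ D) := by
  rw [← Finset.sum_product']
  refine Finset.sum_nbij' (fun T => (T ∩ U, T ∩ X)) (fun q => q.1 ∪ q.2) ?_ ?_ ?_ ?_ ?_
  · intro T hT
    simp only [Finset.mem_product, Finset.mem_powerset]
    exact ⟨inter_subset_right, inter_subset_right⟩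
  · intro q hq
    simp only [Finset.mem_product, Finset.mem_powerset] at hq ⊢
    exact Finset.union_subset_union hq.1 hq.2
  · intro T hT
    simp only [Finset.mem_powerset] at hT
    show T ∩ U ∪ T ∩ X = T
    rw [← Finset.inter_union_distrib_left, Finset.inter_eq_left.mpr hT]
  · intro q hq
    simp only [Finset.mem_product, Finset.mem_powerset] at hq
    have h1 : (q.1 ∪ q.2) ∩ U = q.1 := by
      ext a
      simp only [Finset.mem_inter, Finset.mem_union]
      constructor
      · rintro ⟨h | h, hU⟩
        · exact h
        · exact absurd hU (Finset.disjoint_right.mp hd (hq.2 h))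
      · intro h; exact ⟨Or.inl h, hq.1 h⟩
    have h2 : (q.1 ∪ q.2) ∩ X = q.2 := by
      ext a
      simp only [Finset.mem_inter, Finset.mem_union]
      constructor
      · rintro ⟨h | h, hX⟩
        · exact absurd hX (Finset.disjoint_left.mp hd (hq.1 h))
        · exact h
      · intro h; exact ⟨Or.inr h, hq.2 h⟩
    show ((q.1 ∪ q.2) ∩ U, (q.1 ∪ q.2) ∩ X) = q
    exact Prod.ext h1 h2
  · intro T hT
    simp only [Finset.mem_powerset] at hT
    show f T = f (T ∩ U ∪ T ∩ X)
    rw [← Finset.inter_union_distrib_left, Finset.inter_eq_left.mpr hT]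

lemma upsum_marg (U Ssep : Finset V) (μ : Finset V → ℝ) (hSU : Ssep ⊆ U) (S' : Finset V)
    (hS' : S' ⊆ Ssep) :
    (∑ R ∈ Ssep.powerset, if S' ⊆ R then marg U Ssep μ R else 0) = mom U μ S' := by
  unfold marg mom
  have step : (∑ R ∈ Ssep.powerset, if S' ⊆ R then ∑ T ∈ U.powerset, if T ∩ Ssep = R then μ T else 0 else 0)
      = ∑ R ∈ Ssep.powerset, ∑ T ∈ U.powerset, if T ∩ Ssep = R then (if S' ⊆ R then μ T else 0) else 0 := by
    refine Finset.sum_congr rfl fun R _ => ?_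
    by_cases h : S' ⊆ R
    · simp [h]
    · simp [h]
  rw [step, Finset.sum_comm]
  refine Finset.sum_congr rfl fun T hT => ?_
  rw [Finset.sum_ite_eq Ssep.powerset (T ∩ Ssep) (fun R => if S' ⊆ R then μ T else 0),
    if_pos (Finset.mem_powerset.mpr inter_subset_right)]
  congr 1
  simp only [Finset.subset_inter_iff, eq_iff_iff, and_iff_left hS']

variable {V : Type} [DecidableEq V]

lemma mobius (Ssep : Finset V) (f g : Finset V → ℝ)
    (h : ∀ S' ⊆ Ssep, (∑ R ∈ Ssep.powerset, if S' ⊆ R then f R else 0)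
        = ∑ R ∈ Ssep.powerset, if S' ⊆ R then g R else 0) :
    ∀ R ⊆ Ssep, f R = g R := by
  suffices H : ∀ n, ∀ R, R ⊆ Ssep → (Ssep \ R).card = n → f R = g R by
    exact fun R hR => H _ R hR rfl
  intro n
  induction n using Nat.strong_induction_on with
  | _ n ih =>
    intro R hR hcard
    have h1 := h R hR
    rw [← Finset.sum_filter, ← Finset.sum_filter] at h1
    have hmem : R ∈ Ssep.powerset.filter (fun R' => R ⊆ R') :=
      Finset.mem_filter.mpr ⟨Finset.mem_powerset.mpr hR, Finset.Subset.refl _⟩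
    rw [← Finset.add_sum_erase _ f hmem, ← Finset.add_sum_erase _ g hmem] at h1
    have hrest : ∀ R' ∈ (Ssep.powerset.filter (fun R' => R ⊆ R')).erase R, f R' = g R' := by
      intro R' hR'
      rcases Finset.mem_erase.mp hR' with ⟨hne, hR'2⟩
      rcases Finset.mem_filter.mp hR'2 with ⟨hpow, hsub⟩
      have hR'S : R' ⊆ Ssep := Finset.mem_powerset.mp hpow
      have hss : R ⊂ R' := Finset.ssubset_iff_subset_ne.mpr ⟨hsub, Ne.symm hne⟩
      have hlt : (Ssep \ R').card < n := by
        rw [← hcard]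
        apply Finset.card_lt_card
        rw [Finset.ssubset_iff_of_subset (Finset.sdiff_subset_sdiff (le_refl _) hss.1)]
        obtain ⟨x, hxR', hxR⟩ := Finset.exists_of_ssubset hss
        exact ⟨x, Finset.mem_sdiff.mpr ⟨hR'S hxR', hxR⟩, fun hc => (Finset.mem_sdiff.mp hc).2 hxR'⟩
      exact ih _ hlt R' hR'S rfl
    have := Finset.sum_congr rfl hrest
    linarith [h1, this]

lemma marg_as_sum (Ssep X : Finset V) (hd : Disjoint Ssep X) (ν : Finset V → ℝ)
    (R : Finset V) (hR : R ⊆ Ssep) :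
    marg (Ssep ∪ X) Ssep ν R = ∑ D ∈ X.powerset, ν (R ∪ D) := by
  unfold marg
  rw [sum_union_reindex Ssep X hd]
  have step : ∀ R' ∈ Ssep.powerset,
      (∑ D ∈ X.powerset, if (R' ∪ D) ∩ Ssep = R then ν (R' ∪ D) else 0)
        = if R' = R then (∑ D ∈ X.powerset, ν (R' ∪ D)) else 0 := by
    intro R' hR'
    have hR'S : R' ⊆ Ssep := Finset.mem_powerset.mp hR'
    have key : ∀ D ∈ X.powerset, (R' ∪ D) ∩ Ssep = R' := by
      intro D hD
      have hDX : D ⊆ X := Finset.mem_powerset.mp hD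
      rw [Finset.union_inter_distrib_right, Finset.inter_eq_left.mpr hR'S,
        Finset.disjoint_iff_inter_eq_empty.mp (hd.symm.mono_left hDX), Finset.union_empty]
    by_cases h : R' = R
    · rw [if_pos h]
      refine Finset.sum_congr rfl fun D hD => ?_
      rw [key D hD, if_pos h]
    · rw [if_neg h]
      refine Finset.sum_eq_zero fun D hD => ?_
      rw [key D hD, if_neg h]
  rw [Finset.sum_congr rfl step, Finset.sum_ite_eq' Ssep.powerset R
    (fun R' => ∑ D ∈ X.powerset, ν (R' ∪ D)), if_pos (Finset.mem_powerset.mpr hR)]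


variable {V : Type} [DecidableEq V]

lemma hull_to_rep (C : Finset V) (z : Finset V → ℝ)
    (hz : z ∈ convexHull ℝ (MultilinearSet C (C.powerset.filter fun e => 2 ≤ e.card))) :
    ∃ μ : Finset V → ℝ, (∀ T, 0 ≤ μ T) ∧ (∑ T ∈ C.powerset, μ T = 1) ∧
      ∀ S ⊆ C, S.Nonempty → z S = mom C μ S := by
  classical
  rw [_root_.convexHull_eq] at hz
  obtain ⟨ι, t, w, zf, hw0, hw1, hzf, hcm⟩ := hz
  have hx : ∀ i, ∃ x : V → ℝ, i ∈ t → ((∀ v ∈ C, x v = 0 ∨ x v = 1) ∧ (∀ v ∈ C, zf i {v} = x v) ∧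
      ∀ e ∈ C.powerset.filter (fun e => 2 ≤ e.card), zf i e = ∏ v ∈ e, x v) := by
    intro i
    by_cases hi : i ∈ t
    · obtain ⟨x, hx⟩ := hzf i hi
      exact ⟨x, fun _ => hx⟩
    · exact ⟨fun _ => 0, fun h => absurd h hi⟩
  choose x hx using hx
  set ones : ι → Finset V := fun i => C.filter fun v => x i v = 1 with hones
  have honesC : ∀ i ∈ t, ones i ∈ C.powerset := fun i _ =>
    Finset.mem_powerset.mpr (Finset.filter_subset _ _)
  refine ⟨fun T => ∑ i ∈ t.filter (fun i => ones i = T), w i, ?_, ?_, ?_⟩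
  · intro T
    refine Finset.sum_nonneg fun i hi => hw0 i (Finset.mem_filter.mp hi).1
  · rw [Finset.sum_fiberwise_of_maps_to honesC w, hw1]
  · intro S hSC hSne
    -- value of zf i at S
    have hval : ∀ i ∈ t, zf i S = if S ⊆ ones i then 1 else 0 := by
      intro i hi
      obtain ⟨hx01, hxs, hxe⟩ := hx i hi
      have hcard : S.card = 1 ∨ 2 ≤ S.card := by
        have := Finset.card_pos.mpr hSne
        omega
      rcases hcard with h1 | h2
      · obtain ⟨v, hv⟩ := Finset.card_eq_one.mp h1
        subst hv
        have hvC : v ∈ C := hSC (Finset.mem_singleton_self v)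
        rw [hxs v hvC]
        have : ({v} : Finset V) ⊆ ones i ↔ x i v = 1 := by
          simp [hones, Finset.singleton_subset_iff, hvC]
        rcases hx01 v hvC with h0 | h0 <;> rw [h0] <;> simp [this, h0]
      · have hSE : S ∈ C.powerset.filter (fun e => 2 ≤ e.card) :=
          Finset.mem_filter.mpr ⟨Finset.mem_powerset.mpr hSC, h2⟩
        rw [hxe S hSE, ← prod_ind01 S (ones i)]
        refine Finset.prod_congr rfl fun v hv => ?_
        have hvC : v ∈ C := hSC hv
        rcases hx01 v hvC with h0 | h0 <;> simp [h0, hones, hvC]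
    -- z S as weighted sum
    have hzS : z S = ∑ i ∈ t, (if S ⊆ ones i then w i else 0) := by
      rw [← hcm, Finset.centerMass_eq_of_sum_1 t zf hw1, Finset.sum_apply]
      refine Finset.sum_congr rfl fun i hi => ?_
      rw [Pi.smul_apply, smul_eq_mul, hval i hi]
      by_cases h : S ⊆ ones i <;> simp [h]
    rw [hzS]
    unfold mom
    rw [← Finset.sum_fiberwise_of_maps_to honesC (fun i => if S ⊆ ones i then w i else 0)]
    refine Finset.sum_congr rfl fun T hT => ?_
    by_cases h : S ⊆ T
    · rw [if_pos h]
      refine Finset.sum_congr rfl fun i hi => ?_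
      rw [if_pos ((Finset.mem_filter.mp hi).2 ▸ h)]
    · rw [if_neg h]
      refine Finset.sum_eq_zero fun i hi => ?_
      rw [if_neg ((Finset.mem_filter.mp hi).2 ▸ h)]
lemma rep_to_hull (U : Finset V) (E : Finset (Finset V)) (z : Finset V → ℝ)
    (μ : Finset V → ℝ) (hnn : ∀ T, 0 ≤ μ T) (htot : ∑ T ∈ U.powerset, μ T = 1)
    (hmatch : ∀ S : Finset V, (S ∈ E ∨ (S ⊆ U ∧ S.card = 1)) → z S = mom U μ S) :
    z ∈ convexHull ℝ (MultilinearSet U E) := by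
  classical
  set pt : Finset V → (Finset V → ℝ) := fun T S =>
    if (S ∈ E ∨ (S ⊆ U ∧ S.card = 1)) then (if S ⊆ T then 1 else 0) else z S with hpt
  have hmem : ∀ T ∈ U.powerset, pt T ∈ MultilinearSet U E := by
    intro T _
    refine ⟨fun v => if v ∈ T then 1 else 0, fun v _ => by by_cases h : v ∈ T <;> simp [h],
      ?_, ?_⟩
    · intro v hv
      have hcond : ({v} : Finset V) ∈ E ∨ (({v} : Finset V) ⊆ U ∧ ({v} : Finset V).card = 1) :=
        Or.inr ⟨Finset.singleton_subset_iff.mpr hv, Finset.card_singleton v⟩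
      show (if ({v} : Finset V) ∈ E ∨ (({v}:Finset V) ⊆ U ∧ ({v}:Finset V).card = 1)
          then if ({v}:Finset V) ⊆ T then (1:ℝ) else 0 else z {v}) = _
      rw [if_pos hcond]
      simp [Finset.singleton_subset_iff]
    · intro e he
      rw [hpt]
      simp only [if_pos (Or.inl he)]
      rw [prod_ind01]
  have hz : z = ∑ T ∈ U.powerset, μ T • pt T := by
    funext S
    rw [Finset.sum_apply]
    simp only [Pi.smul_apply, smul_eq_mul]
    by_cases hc : (S ∈ E ∨ (S ⊆ U ∧ S.card = 1))
    · rw [hmatch S hc]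
      unfold mom
      refine Finset.sum_congr rfl fun T _ => ?_
      rw [hpt]
      simp only [if_pos hc]
      by_cases h : S ⊆ T <;> simp [h]
    · have : ∀ T ∈ U.powerset, μ T * pt T S = μ T * z S := by
        intro T _
        rw [hpt]
        simp only [if_neg hc]
      rw [Finset.sum_congr rfl this, ← Finset.sum_mul, htot, one_mul]
  rw [hz, ← Finset.centerMass_eq_of_sum_1 U.powerset pt htot]
  exact Finset.centerMass_mem_convexHull U.powerset (fun T _ => hnn T) (by rw [htot]; norm_num)
    hmem
lemma glue (U W : Finset V) (μ ν : Finset V → ℝ)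
    (hμ0 : ∀ T, 0 ≤ μ T) (hμ1 : ∑ T ∈ U.powerset, μ T = 1)
    (hν0 : ∀ T, 0 ≤ ν T) (hν1 : ∑ T ∈ W.powerset, ν T = 1)
    (hcons : ∀ S ⊆ U ∩ W, S.Nonempty → mom U μ S = mom W ν S) :
    ∃ ρ : Finset V → ℝ, (∀ T, 0 ≤ ρ T) ∧ (∑ T ∈ (U ∪ W).powerset, ρ T = 1) ∧
      (∀ S ⊆ U, mom (U ∪ W) ρ S = mom U μ S) ∧
      (∀ S ⊆ W, mom (U ∪ W) ρ S = mom W ν S) := by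
  classical
  set Ssep := U ∩ W with hSsep
  set X := W \ U with hX
  set Y := U \ W with hY
  have hdUX : Disjoint U X := Finset.sdiff_disjoint.symm
  have hdWY : Disjoint W Y := Finset.sdiff_disjoint.symm
  have hdSX : Disjoint Ssep X := hdUX.mono_left Finset.inter_subset_left
  have hdSY : Disjoint Ssep Y := hdWY.mono_left Finset.inter_subset_right
  have hWdecomp : Ssep ∪ X = W := by
    ext a; rw [hSsep, hX]; simp only [Finset.mem_union, Finset.mem_inter, Finset.mem_sdiff]; tauto
  have hUdecomp : Ssep ∪ Y = U := by
    ext a; rw [hSsep, hY]; simp only [Finset.mem_union, Finset.mem_inter, Finset.mem_sdiff]; tauto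
  have hUX : U ∪ W = U ∪ X := by
    ext a; rw [hX]; simp only [Finset.mem_union, Finset.mem_sdiff]; tauto
  have hWY : U ∪ W = W ∪ Y := by
    ext a; rw [hY]; simp only [Finset.mem_union, Finset.mem_sdiff]; tauto
  have hmargeq : ∀ R ⊆ Ssep, marg U Ssep μ R = marg W Ssep ν R := by
    refine mobius Ssep _ _ ?_
    intro S' hS'
    rw [upsum_marg U Ssep μ Finset.inter_subset_left S' hS',
        upsum_marg W Ssep ν Finset.inter_subset_right S' hS']
    rcases Finset.eq_empty_or_nonempty S' with h | h
    · subst h; rw [mom_empty, mom_empty, hμ1, hν1]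
    · exact hcons S' hS' h
  set ρ : Finset V → ℝ := fun T =>
    if T ⊆ U ∪ W ∧ marg U Ssep μ (T ∩ Ssep) ≠ 0
      then μ (T ∩ U) * ν (T ∩ W) / marg U Ssep μ (T ∩ Ssep) else 0 with hρ
  have hρ0 : ∀ T, 0 ≤ ρ T := by
    intro T; rw [hρ]; dsimp only
    by_cases h : T ⊆ U ∪ W ∧ marg U Ssep μ (T ∩ Ssep) ≠ 0
    · rw [if_pos h]
      exact div_nonneg (mul_nonneg (hμ0 _) (hν0 _)) (marg_nonneg U Ssep μ hμ0 _)
    · rw [if_neg h]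
  have hmomL : ∀ S ⊆ U, mom (U ∪ W) ρ S = mom U μ S := by
    intro S hS
    unfold mom
    rw [hUX, sum_union_reindex U X hdUX]
    refine Finset.sum_congr rfl fun A hA => ?_
    have hAU : A ⊆ U := Finset.mem_powerset.mp hA
    have key : ∀ D ∈ X.powerset,
        (if S ⊆ A ∪ D then ρ (A ∪ D) else 0)
          = if S ⊆ A then (if marg U Ssep μ (A ∩ Ssep) ≠ 0
              then μ A * ν ((A ∩ Ssep) ∪ D) / marg U Ssep μ (A ∩ Ssep) else 0) else 0 := by
      intro D hD
      have hDX : D ⊆ X := Finset.mem_powerset.mp hD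
      have hDm : ∀ a ∈ D, a ∈ W ∧ a ∉ U := by
        intro a ha
        have := hDX ha; rw [hX] at this; exact Finset.mem_sdiff.mp this
      have hsub : S ⊆ A ∪ D ↔ S ⊆ A := by
        constructor
        · intro h a ha
          rcases Finset.mem_union.mp (h ha) with h' | h'
          · exact h'
          · exact absurd (hS ha) (hDm a h').2
        · exact fun h => h.trans Finset.subset_union_left
      have e1 : (A ∪ D) ∩ U = A := by
        ext a
        simp only [Finset.mem_inter, Finset.mem_union]
        constructor
        · rintro ⟨h' | h', hU⟩
          · exact h'
          · exact absurd hU (hDm a h').2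
        · exact fun h => ⟨Or.inl h, hAU h⟩
      have e2 : (A ∪ D) ∩ W = (A ∩ Ssep) ∪ D := by
        ext a
        have h1 : a ∈ A → a ∈ U := fun h => hAU h
        have h2 : a ∈ D → a ∈ W ∧ a ∉ U := hDm a
        rw [hSsep]
        simp only [Finset.mem_inter, Finset.mem_union]
        tauto
      have e3 : (A ∪ D) ∩ Ssep = A ∩ Ssep := by
        ext a
        have h2 : a ∈ D → a ∈ W ∧ a ∉ U := hDm a
        rw [hSsep]
        simp only [Finset.mem_inter, Finset.mem_union]
        tauto
      have e4 : A ∪ D ⊆ U ∪ W := by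
        intro a ha
        rcases Finset.mem_union.mp ha with h' | h'
        · exact Finset.mem_union_left _ (hAU h')
        · exact Finset.mem_union_right _ (hDm a h').1
      rw [hρ]; dsimp only
      rw [e1, e2, e3]
      by_cases hSA : S ⊆ A
      · rw [if_pos (hsub.mpr hSA), if_pos hSA]
        by_cases hm0 : marg U Ssep μ (A ∩ Ssep) = 0
        · simp [hm0]
        · rw [if_pos ⟨e4, hm0⟩, if_pos hm0]
      · rw [if_neg (fun h => hSA (hsub.mp h)), if_neg hSA]
    rw [Finset.sum_congr rfl key]
    by_cases hSA : S ⊆ A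
    · simp only [if_pos hSA]
      by_cases hm0 : marg U Ssep μ (A ∩ Ssep) = 0
      · simp only [hm0, ne_eq, not_true_eq_false, if_false]
        rw [Finset.sum_const_zero]
        exact (marg_zero U Ssep μ hμ0 A hAU hm0).symm
      · simp only [ne_eq, hm0, not_false_eq_true, if_true]
        rw [← Finset.sum_div, ← Finset.mul_sum]
        have : (∑ D ∈ X.powerset, ν ((A ∩ Ssep) ∪ D)) = marg U Ssep μ (A ∩ Ssep) := by
          rw [← marg_as_sum Ssep X hdSX ν (A ∩ Ssep) Finset.inter_subset_right, hWdecomp]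
          exact (hmargeq (A ∩ Ssep) Finset.inter_subset_right).symm
        rw [this, mul_div_assoc, div_self hm0, mul_one]
    · simp only [if_neg hSA, Finset.sum_const_zero]
  have hmomR : ∀ S ⊆ W, mom (U ∪ W) ρ S = mom W ν S := by
    intro S hS
    unfold mom
    rw [hWY, sum_union_reindex W Y hdWY]
    refine Finset.sum_congr rfl fun B hB => ?_
    have hBW : B ⊆ W := Finset.mem_powerset.mp hB
    have key : ∀ D ∈ Y.powerset,
        (if S ⊆ B ∪ D then ρ (B ∪ D) else 0)
          = if S ⊆ B then (if marg U Ssep μ (B ∩ Ssep) ≠ 0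
              then μ ((B ∩ Ssep) ∪ D) * ν B / marg U Ssep μ (B ∩ Ssep) else 0) else 0 := by
      intro D hD
      have hDY : D ⊆ Y := Finset.mem_powerset.mp hD
      have hDm : ∀ a ∈ D, a ∈ U ∧ a ∉ W := by
        intro a ha
        have := hDY ha; rw [hY] at this; exact Finset.mem_sdiff.mp this
      have hsub : S ⊆ B ∪ D ↔ S ⊆ B := by
        constructor
        · intro h a ha
          rcases Finset.mem_union.mp (h ha) with h' | h'
          · exact h'
          · exact absurd (hS ha) (hDm a h').2
        · exact fun h => h.trans Finset.subset_union_left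
      have e1 : (B ∪ D) ∩ U = (B ∩ Ssep) ∪ D := by
        ext a
        have h1 : a ∈ B → a ∈ W := fun h => hBW h
        have h2 : a ∈ D → a ∈ U ∧ a ∉ W := hDm a
        rw [hSsep]
        simp only [Finset.mem_inter, Finset.mem_union]
        tauto
      have e2 : (B ∪ D) ∩ W = B := by
        ext a
        simp only [Finset.mem_inter, Finset.mem_union]
        constructor
        · rintro ⟨h' | h', hW⟩
          · exact h'
          · exact absurd hW (hDm a h').2
        · exact fun h => ⟨Or.inl h, hBW h⟩
      have e3 : (B ∪ D) ∩ Ssep = B ∩ Ssep := by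
        ext a
        have h2 : a ∈ D → a ∈ U ∧ a ∉ W := hDm a
        rw [hSsep]
        simp only [Finset.mem_inter, Finset.mem_union]
        tauto
      have e4 : B ∪ D ⊆ U ∪ W := by
        intro a ha
        rcases Finset.mem_union.mp ha with h' | h'
        · exact Finset.mem_union_right _ (hBW h')
        · exact Finset.mem_union_left _ (hDm a h').1
      rw [hρ]; dsimp only
      rw [e1, e2, e3]
      by_cases hSB : S ⊆ B
      · rw [if_pos (hsub.mpr hSB), if_pos hSB]
        by_cases hm0 : marg U Ssep μ (B ∩ Ssep) = 0
        · simp [hm0]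
        · rw [if_pos ⟨e4, hm0⟩, if_pos hm0]
      · rw [if_neg (fun h => hSB (hsub.mp h)), if_neg hSB]
    rw [Finset.sum_congr rfl key]
    by_cases hSB : S ⊆ B
    · simp only [if_pos hSB]
      by_cases hm0 : marg U Ssep μ (B ∩ Ssep) = 0
      · simp only [hm0, ne_eq, not_true_eq_false, if_false]
        rw [Finset.sum_const_zero]
        refine (marg_zero W Ssep ν hν0 B hBW ?_).symm
        rw [← hmargeq (B ∩ Ssep) Finset.inter_subset_right]
        exact hm0
      · simp only [ne_eq, hm0, not_false_eq_true, if_true]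
        have step : ∀ D ∈ Y.powerset,
            μ ((B ∩ Ssep) ∪ D) * ν B / marg U Ssep μ (B ∩ Ssep)
              = μ ((B ∩ Ssep) ∪ D) * (ν B / marg U Ssep μ (B ∩ Ssep)) := by
          intro D _; ring
        rw [Finset.sum_congr rfl step, ← Finset.sum_mul]
        have : (∑ D ∈ Y.powerset, μ ((B ∩ Ssep) ∪ D)) = marg U Ssep μ (B ∩ Ssep) := by
          rw [← marg_as_sum Ssep Y hdSY μ (B ∩ Ssep) Finset.inter_subset_right, hUdecomp]
        rw [this, mul_div_assoc']
        rw [mul_comm, mul_div_assoc, div_self hm0, mul_one]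
    · simp only [if_neg hSB, Finset.sum_const_zero]
  have hρ1 : ∑ T ∈ (U ∪ W).powerset, ρ T = 1 := by
    have := hmomL ∅ (Finset.empty_subset U)
    rw [mom_empty, mom_empty, hμ1] at this
    exact this
  exact ⟨ρ, hρ0, hρ1, hmomL, hmomR⟩
end Aux

/-- if the family `𝒞` of maximal cliques has the running intersection property,
then the clique relaxation equals the multilinear polytope of the UGM hypergraph
`G = ∪_{C ∈ 𝒞} G_C`. -/
theorem clique_relaxation_eq_multilinear_polytope {V : Type} [Fintype V] [DecidableEq V]
    (𝒞 : Finset (Finset V))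
    (hmax : ∀ C ∈ 𝒞, ∀ C' ∈ 𝒞, C ⊆ C' → C = C')
    (hRIP : HasRIP 𝒞) :
    {z : Finset V → ℝ | ∀ C ∈ 𝒞,
        z ∈ convexHull ℝ (MultilinearSet C (C.powerset.filter fun e => 2 ≤ e.card))} =
      convexHull ℝ (MultilinearSet (𝒞.sup id) (ugmEdges 𝒞)) := by
  classical
  apply Set.Subset.antisymm
  · intro z hz
    simp only [Set.mem_setOf_eq] at hz
    obtain ⟨m, p, hpmem, hpsurj, hpinj, hrip⟩ := hRIP
    set Uk : ℕ → Finset V :=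
      fun k => (Finset.univ.filter fun i : Fin m => (i : ℕ) < k).biUnion p with hUk
    have key : ∀ k, k ≤ m → ∃ μ : Finset V → ℝ, (∀ T, 0 ≤ μ T) ∧
        (∑ T ∈ (Uk k).powerset, μ T = 1) ∧
        ∀ i : Fin m, (i : ℕ) < k → ∀ S ⊆ p i, S.Nonempty → z S = mom (Uk k) μ S := by
      intro k
      induction k with
      | zero =>
        intro _
        refine ⟨fun T => if T = ∅ then 1 else 0, ?_, ?_, ?_⟩
        · intro T; by_cases h : T = ∅ <;> simp [h]
        · have h0 : Uk 0 = ∅ := by rw [hUk]; simp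
          rw [h0]
          simp
        · intro i hi; omega
      | succ k ih =>
        intro hk1
        obtain ⟨μ, hμ0, hμ1, hμm⟩ := ih (by omega)
        have hkm : k < m := hk1
        set kk : Fin m := ⟨k, hkm⟩ with hkk
        have hWC : p kk ∈ 𝒞 := hpmem kk
        obtain ⟨ν, hν0, hν1, hνm⟩ := hull_to_rep (p kk) z (hz (p kk) hWC)
        have hUsucc : Uk (k + 1) = Uk k ∪ p kk := by
          rw [hUk]
          ext v
          simp only [Finset.mem_biUnion, Finset.mem_filter, Finset.mem_univ, true_and,
            Finset.mem_union]
          constructor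
          · rintro ⟨i, hik, hv⟩
            rcases Nat.lt_or_ge (i : ℕ) k with h | h
            · exact Or.inl ⟨i, h, hv⟩
            · have : (i : ℕ) = k := by omega
              have : i = kk := Fin.ext this
              exact Or.inr (this ▸ hv)
          · rintro (⟨i, hik, hv⟩ | hv)
            · exact ⟨i, by omega, hv⟩
            · exact ⟨kk, by simp [hkk], hv⟩
        have hcons : ∀ S ⊆ Uk k ∩ p kk, S.Nonempty → mom (Uk k) μ S = mom (p kk) ν S := by
          intro S hSsub hSne
          have hSU : S ⊆ Uk k := hSsub.trans Finset.inter_subset_left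
          have hSW : S ⊆ p kk := hSsub.trans Finset.inter_subset_right
          rcases Nat.eq_zero_or_pos k with hk0 | hk0
          · exfalso
            have h0 : Uk k = ∅ := by subst hk0; rw [hUk]; simp
            obtain ⟨a, ha⟩ := hSne
            rw [h0] at hSU
            exact absurd (hSU ha) (Finset.notMem_empty a)
          · obtain ⟨j, hjk, hsep⟩ := hrip kk (by simpa [hkk] using hk0)
            have hfil : (Finset.univ.filter fun i : Fin m => i < kk).biUnion p = Uk k := by
              rw [hUk]
              congr 1
            have hSj : S ⊆ p j := by
              refine subset_trans ?_ hsep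
              rw [hfil]
              intro a ha
              exact Finset.mem_inter.mpr ⟨hSW ha, hSU ha⟩
            have hjklt : (j : ℕ) < k := hjk
            rw [← hμm j hjklt S hSj hSne]
            exact (hνm S hSW hSne)
        obtain ⟨ρ, hρ0, hρ1, hρL, hρR⟩ := glue (Uk k) (p kk) μ ν hμ0 hμ1 hν0 hν1 hcons
        refine ⟨ρ, hρ0, by rw [hUsucc]; exact hρ1, ?_⟩
        intro i hik S hSpi hSne
        rw [hUsucc]
        rcases Nat.lt_or_ge (i : ℕ) k with h | h
        · have hpiU : p i ⊆ Uk k := by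
            rw [hUk]
            intro a ha
            exact Finset.mem_biUnion.mpr ⟨i, Finset.mem_filter.mpr ⟨Finset.mem_univ i, h⟩, ha⟩
          rw [hρL S (hSpi.trans hpiU)]
          exact hμm i h S hSpi hSne
        · have hik' : (i : ℕ) = k := by omega
          have hieq : i = kk := Fin.ext (by rw [hik', hkk])
          rw [hρR S (hieq ▸ hSpi)]
          exact hνm S (hieq ▸ hSpi) hSne
    obtain ⟨μ, hμ0, hμ1, hμm⟩ := key m le_rfl
    have hsup : 𝒞.sup id = Uk m := by
      rw [hUk]
      ext v
      simp only [Finset.mem_sup, id_eq, Finset.mem_biUnion, Finset.mem_filter, Finset.mem_univ,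
        true_and]
      constructor
      · rintro ⟨C, hC, hv⟩
        obtain ⟨i, hi⟩ := hpsurj C hC
        exact ⟨i, i.isLt, hi ▸ hv⟩
      · rintro ⟨i, _, hv⟩
        exact ⟨p i, hpmem i, hv⟩
    rw [hsup]
    refine rep_to_hull (Uk m) (ugmEdges 𝒞) z μ hμ0 hμ1 ?_
    intro S hScond
    rcases hScond with hSE | ⟨hSU, hcard⟩
    · obtain ⟨C, hC, hSC⟩ := Finset.mem_biUnion.mp hSE
      rcases Finset.mem_filter.mp hSC with ⟨hSpow, h2⟩
      obtain ⟨i, hi⟩ := hpsurj C hC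
      refine hμm i i.isLt S (hi ▸ Finset.mem_powerset.mp hSpow) ?_
      rw [← Finset.card_pos]; omega
    · obtain ⟨v, hv⟩ := Finset.card_eq_one.mp hcard
      subst hv
      have hvU : v ∈ Uk m := hSU (Finset.mem_singleton_self v)
      rw [hUk] at hvU
      obtain ⟨i, _, hvi⟩ := Finset.mem_biUnion.mp hvU
      exact hμm i i.isLt {v} (Finset.singleton_subset_iff.mpr hvi) ⟨v, Finset.mem_singleton_self v⟩
  · intro z hzmem
    intro C hC
    refine convexHull_mono ?_ hzmem
    rintro y ⟨x, hx01, hxs, hxe⟩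
    refine ⟨x, ?_, ?_, ?_⟩
    · intro v hv
      exact hx01 v (Finset.mem_sup.mpr ⟨C, hC, hv⟩)
    · intro v hv
      exact hxs v (Finset.mem_sup.mpr ⟨C, hC, hv⟩)
    · intro e he
      exact hxe e (Finset.mem_biUnion.mpr ⟨C, hC, he⟩)
end

section
/- Let G'=(V',E') be a hypergraph and let v̄ ∉ V'. Let G be the hypergraph with node set V = V' ∪ {v̄} and edge set E = E' ∪ {{v, v̄} : v ∈ V'} ∪ {e ∪ {v̄} : e ∈ E'}. Suppose the multilinear polytope MP(G') is exactly the set of z' satisfying a finite system of inequalities ∑_{v∈V'} a^i_v z'_v + ∑_{e∈E'} a^i_e z'_e ≤ α_i for i ∈ I. Then MP(G) is exactly the set of z satisfying: 0 ≤ z_{v̄} ≤ 1; ∑_{v∈V'} a^i_v z_{{v,v̄}} + ∑_{e∈E'} a^i_e z_{e∪{v̄}} ≤ α_i z_{v̄} for all i ∈ I; and ∑_{v∈V'} a^i_v (z_v − z_{{v,v̄}}) + ∑_{e∈E'} a^i_e (z_e − z_{e∪{v̄}}) ≤ α_i (1 − z_{v̄}) for all i ∈ I. -/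
open Finset

section Aux

variable {V : Type} [DecidableEq V]

lemma sum_mul_combo {β : Type*} (s : Finset β) (c f g : β → ℝ) (p q : ℝ) :
    ∑ x ∈ s, c x * (p * f x + q * g x)
      = p * ∑ x ∈ s, c x * f x + q * ∑ x ∈ s, c x * g x := by
  rw [Finset.mul_sum, Finset.mul_sum, ← Finset.sum_add_distrib]
  exact Finset.sum_congr rfl fun x _ => by ring

lemma sum_mul_combo' {β : Type*} (s : Finset β) (c f g f' g' : β → ℝ) (p q : ℝ) :
    ∑ x ∈ s, c x * ((p * f x + q * g x) - (p * f' x + q * g' x))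
      = p * ∑ x ∈ s, c x * (f x - f' x) + q * ∑ x ∈ s, c x * (g x - g' x) := by
  rw [Finset.mul_sum, Finset.mul_sum, ← Finset.sum_add_distrib]
  exact Finset.sum_congr rfl fun x _ => by ring

lemma sum_mul_combo'' {β : Type*} (s : Finset β) (c f g : β → ℝ) (t : ℝ) :
    ∑ x ∈ s, c x * (f x + t * g x)
      = ∑ x ∈ s, c x * f x + t * ∑ x ∈ s, c x * g x := by
  rw [Finset.mul_sum, ← Finset.sum_add_distrib]
  exact Finset.sum_congr rfl fun x _ => by ring

lemma sum_mul_div {β : Type*} (s : Finset β) (c f : β → ℝ) (d : ℝ) :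
    ∑ x ∈ s, c x * (f x / d) = (∑ x ∈ s, c x * f x) / d := by
  rw [Finset.sum_div]
  exact Finset.sum_congr rfl fun x _ => (mul_div_assoc _ _ _).symm

lemma icc_linear_zero {b u : ℝ} (h : ∀ t : ℝ, 0 ≤ t → b + t * u ∈ Set.Icc (0:ℝ) 1) :
    u = 0 := by
  have hb := h 0 le_rfl
  simp only [zero_mul, add_zero, Set.mem_Icc] at hb
  by_contra hne
  rcases lt_or_gt_of_ne hne with hlt | hgt
  · have ht : 0 ≤ (-b - 1) / u := le_of_lt (div_pos_of_neg_of_neg (by linarith) hlt)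
    have h2 := h _ ht
    rw [div_mul_cancel₀ _ (ne_of_lt hlt)] at h2
    simp only [Set.mem_Icc] at h2
    linarith [h2.1]
  · have ht : 0 ≤ (2 - b) / u := le_of_lt (div_pos (by linarith) hgt)
    have h2 := h _ ht
    rw [div_mul_cancel₀ _ (ne_of_gt hgt)] at h2
    simp only [Set.mem_Icc] at h2
    linarith [h2.2]

/-- Membership in the convex hull of the multilinear set depends only on the
relevant coordinates. -/
lemma memHull_congr (Vset : Finset V) (E : Finset (Finset V))
    {z z' : Finset V → ℝ}
    (hz : z ∈ convexHull ℝ (MultilinearSet Vset E))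
    (h1 : ∀ v ∈ Vset, z' {v} = z {v}) (h2 : ∀ e ∈ E, z' e = z e) :
    z' ∈ convexHull ℝ (MultilinearSet Vset E) := by
  set c : Finset V → ℝ := z' - z with hc
  set f : (Finset V → ℝ) →ᵃ[ℝ] (Finset V → ℝ) :=
    AffineMap.id ℝ (Finset V → ℝ) + AffineMap.const ℝ (Finset V → ℝ) c with hf
  have hfapp : ∀ w : Finset V → ℝ, f w = w + c := fun w => rfl
  have himg : f '' MultilinearSet Vset E ⊆ MultilinearSet Vset E := by
    rintro _ ⟨w, ⟨x, hx, hxv, hxe⟩, rfl⟩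
    rw [hfapp]
    refine ⟨x, hx, ?_, ?_⟩
    · intro v hv
      have hcv : c {v} = 0 := by simp [hc, h1 v hv]
      simp [Pi.add_apply, hcv, hxv v hv]
    · intro e he
      have hce : c e = 0 := by simp [hc, h2 e he]
      simp [Pi.add_apply, hce, hxe e he]
  have hz' : z' = f z := by
    rw [hfapp, hc]; abel
  rw [hz']
  have := AffineMap.image_convexHull f (MultilinearSet Vset E)
  exact convexHull_mono himg (this ▸ Set.mem_image_of_mem f hz)

/-- relevant coordinates of points of the hull lie in `[0,1]`. -/
lemma hull_bounds (V' : Finset V) (E' : Finset (Finset V)) (hE' : ∀ e ∈ E', e ⊆ V')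
    {z : Finset V → ℝ} (hz : z ∈ convexHull ℝ (MultilinearSet V' E')) :
    (∀ v ∈ V', z {v} ∈ Set.Icc (0:ℝ) 1) ∧ ∀ e ∈ E', z e ∈ Set.Icc (0:ℝ) 1 := by
  have hsub : convexHull ℝ (MultilinearSet V' E') ⊆
      {z : Finset V → ℝ | (∀ v ∈ V', z {v} ∈ Set.Icc (0:ℝ) 1) ∧
        ∀ e ∈ E', z e ∈ Set.Icc (0:ℝ) 1} := by
    apply convexHull_min
    · rintro w ⟨x, hx, hxv, hxe⟩
      constructor
      · intro v hv; rw [hxv v hv]; rcases hx v hv with h | h <;> simp [h]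
      · intro e he
        rw [hxe e he]
        constructor
        · exact Finset.prod_nonneg fun v hv => by
            rcases hx v (hE' e he hv) with h | h <;> simp [h]
        · exact Finset.prod_le_one
            (fun v hv => by rcases hx v (hE' e he hv) with h | h <;> simp [h])
            (fun v hv => by rcases hx v (hE' e he hv) with h | h <;> simp [h])
    · intro z1 hz1 z2 hz2 p q hp hq hpq
      constructor
      · intro v hv
        simpa using (convex_Icc (0:ℝ) 1) (hz1.1 v hv) (hz2.1 v hv) hp hq hpq
      · intro e he
        simpa using (convex_Icc (0:ℝ) 1) (hz1.2 e he) (hz2.2 e he) hp hq hpq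
  exact hsub hz

lemma lift1_mem (V' : Finset V) (E' : Finset (Finset V))
    (hE' : ∀ e ∈ E', e ⊆ V' ∧ 2 ≤ e.card)
    (vbar : V) (hvbar : vbar ∉ V') {y : Finset V → ℝ}
    (hy : y ∈ convexHull ℝ (MultilinearSet V' E')) :
    (fun e => if e = {vbar} then (1:ℝ) else if vbar ∈ e then y (e.erase vbar) else y e) ∈
      convexHull ℝ (MultilinearSet (insert vbar V')
        (E' ∪ V'.image (fun v => ({v, vbar} : Finset V)) ∪ E'.image (fun e => insert vbar e))) := by
  classical
  set L : (Finset V → ℝ) →ₗ[ℝ] (Finset V → ℝ) :=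
    LinearMap.pi (fun e => if e = ({vbar} : Finset V) then 0
      else if vbar ∈ e then LinearMap.proj (e.erase vbar) else LinearMap.proj e) with hL
  set f : (Finset V → ℝ) →ᵃ[ℝ] (Finset V → ℝ) :=
    L.toAffineMap + AffineMap.const ℝ (Finset V → ℝ)
      (fun e => if e = ({vbar} : Finset V) then (1:ℝ) else 0) with hfdef
  have hfapp : ∀ (w : Finset V → ℝ) (e : Finset V),
      f w e = if e = {vbar} then (1:ℝ) else if vbar ∈ e then w (e.erase vbar) else w e := by
    intro w e
    by_cases h1 : e = ({vbar} : Finset V)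
    · simp [hfdef, hL, h1, LinearMap.pi_apply]
    · by_cases h2 : vbar ∈ e <;>
        simp [hfdef, hL, h1, h2, LinearMap.pi_apply]
  have himg : f '' MultilinearSet V' E' ⊆ MultilinearSet (insert vbar V')
      (E' ∪ V'.image (fun v => ({v, vbar} : Finset V)) ∪ E'.image (fun e => insert vbar e)) := by
    rintro _ ⟨w, ⟨x, hx, hxv, hxe⟩, rfl⟩
    refine ⟨Function.update x vbar 1, ?_, ?_, ?_⟩
    · intro v hv
      rcases Finset.mem_insert.1 hv with rfl | hv
      · simp
      · rw [Function.update_of_ne (ne_of_mem_of_not_mem hv hvbar)]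
        exact hx v hv
    · intro v hv
      rcases Finset.mem_insert.1 hv with rfl | hv
      · rw [hfapp]; simp
      · have hne : v ≠ vbar := ne_of_mem_of_not_mem hv hvbar
        have h1 : ({v} : Finset V) ≠ {vbar} := by
          simp [Finset.singleton_inj, hne]
        have h2 : vbar ∉ ({v} : Finset V) := by
          simp only [Finset.mem_singleton]
          exact fun h => hne h.symm
        rw [hfapp, if_neg h1, if_neg h2, Function.update_of_ne hne]
        exact hxv v hv
    · intro e he
      rw [hfapp]
      rcases Finset.mem_union.1 he with he' | he'
      · rcases Finset.mem_union.1 he' with heE | hePair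
        · obtain ⟨hsub, hcard⟩ := hE' e heE
          have h2 : vbar ∉ e := fun h => hvbar (hsub h)
          have h1 : e ≠ {vbar} := by
            rintro rfl; exact h2 (Finset.mem_singleton_self vbar)
          rw [if_neg h1, if_neg h2, hxe e heE]
          exact Finset.prod_congr rfl fun v hv =>
            (Function.update_of_ne (ne_of_mem_of_not_mem (hsub hv) hvbar) _ _).symm
        · obtain ⟨v, hv, rfl⟩ := Finset.mem_image.1 hePair
          have hne : v ≠ vbar := ne_of_mem_of_not_mem hv hvbar
          have h2 : vbar ∈ ({v, vbar} : Finset V) := by simp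
          have h1 : ({v, vbar} : Finset V) ≠ {vbar} := by
            intro h
            have : v ∈ ({vbar} : Finset V) := h ▸ (by simp)
            exact hne (by simpa using this)
          have herase : ({v, vbar} : Finset V).erase vbar = {v} := by
            rw [Finset.pair_comm]
            exact Finset.erase_insert (by
              simp only [Finset.mem_singleton]
              exact fun h => hne h.symm)
          rw [if_neg h1, if_pos h2, herase, hxv v hv, Finset.prod_pair hne,
            Function.update_of_ne hne, Function.update_self, mul_one]
      · obtain ⟨e', he'E, rfl⟩ := Finset.mem_image.1 he'
        obtain ⟨hsub, hcard⟩ := hE' e' he'E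
        have hvb' : vbar ∉ e' := fun h => hvbar (hsub h)
        have h2 : vbar ∈ insert vbar e' := Finset.mem_insert_self _ _
        have h1 : insert vbar e' ≠ {vbar} := by
          intro h
          obtain ⟨u, hu⟩ : e'.Nonempty := Finset.card_pos.1 (by omega)
          have hu' : u ∈ ({vbar} : Finset V) := h ▸ Finset.mem_insert_of_mem hu
          exact hvb' ((Finset.mem_singleton.1 hu') ▸ hu)
        rw [if_neg h1, if_pos h2, Finset.erase_insert hvb', hxe e' he'E,
          Finset.prod_insert hvb', Function.update_self, one_mul]
        exact Finset.prod_congr rfl fun v hv =>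
            (Function.update_of_ne (ne_of_mem_of_not_mem (hsub hv) hvbar) _ _).symm
  have himage := AffineMap.image_convexHull f (MultilinearSet V' E')
  have hmem : f y ∈ convexHull ℝ (f '' MultilinearSet V' E') :=
    himage ▸ Set.mem_image_of_mem f hy
  have : f y = fun e => if e = {vbar} then (1:ℝ)
      else if vbar ∈ e then y (e.erase vbar) else y e := funext fun e => hfapp y e
  exact this ▸ convexHull_mono himg hmem

lemma lift0_mem (V' : Finset V) (E' : Finset (Finset V))
    (hE' : ∀ e ∈ E', e ⊆ V' ∧ 2 ≤ e.card)
    (vbar : V) (hvbar : vbar ∉ V') {y : Finset V → ℝ}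
    (hy : y ∈ convexHull ℝ (MultilinearSet V' E')) :
    (fun e => if vbar ∈ e then (0:ℝ) else y e) ∈
      convexHull ℝ (MultilinearSet (insert vbar V')
        (E' ∪ V'.image (fun v => ({v, vbar} : Finset V)) ∪ E'.image (fun e => insert vbar e))) := by
  classical
  set L : (Finset V → ℝ) →ₗ[ℝ] (Finset V → ℝ) :=
    LinearMap.pi (fun e => if vbar ∈ e then 0 else LinearMap.proj e) with hL
  have hfapp : ∀ (w : Finset V → ℝ) (e : Finset V),
      L w e = if vbar ∈ e then (0:ℝ) else w e := by
    intro w e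
    by_cases h2 : vbar ∈ e <;> simp [hL, h2, LinearMap.pi_apply]
  have himg : ⇑L '' MultilinearSet V' E' ⊆ MultilinearSet (insert vbar V')
      (E' ∪ V'.image (fun v => ({v, vbar} : Finset V)) ∪ E'.image (fun e => insert vbar e)) := by
    rintro _ ⟨w, ⟨x, hx, hxv, hxe⟩, rfl⟩
    refine ⟨Function.update x vbar 0, ?_, ?_, ?_⟩
    · intro v hv
      rcases Finset.mem_insert.1 hv with rfl | hv
      · simp
      · rw [Function.update_of_ne (ne_of_mem_of_not_mem hv hvbar)]
        exact hx v hv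
    · intro v hv
      rcases Finset.mem_insert.1 hv with rfl | hv
      · rw [hfapp]; simp
      · have hne : v ≠ vbar := ne_of_mem_of_not_mem hv hvbar
        have h2 : vbar ∉ ({v} : Finset V) := by
          simp only [Finset.mem_singleton]
          exact fun h => hne h.symm
        rw [hfapp, if_neg h2, Function.update_of_ne hne]
        exact hxv v hv
    · intro e he
      rw [hfapp]
      rcases Finset.mem_union.1 he with he' | he'
      · rcases Finset.mem_union.1 he' with heE | hePair
        · obtain ⟨hsub, hcard⟩ := hE' e heE
          have h2 : vbar ∉ e := fun h => hvbar (hsub h)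
          rw [if_neg h2, hxe e heE]
          exact Finset.prod_congr rfl fun v hv =>
            (Function.update_of_ne (ne_of_mem_of_not_mem (hsub hv) hvbar) _ _).symm
        · obtain ⟨v, hv, rfl⟩ := Finset.mem_image.1 hePair
          have hne : v ≠ vbar := ne_of_mem_of_not_mem hv hvbar
          have h2 : vbar ∈ ({v, vbar} : Finset V) := by simp
          rw [if_pos h2, Finset.prod_pair hne, Function.update_self, mul_zero]
      · obtain ⟨e', he'E, rfl⟩ := Finset.mem_image.1 he'
        obtain ⟨hsub, hcard⟩ := hE' e' he'E
        have hvb' : vbar ∉ e' := fun h => hvbar (hsub h)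
        have h2 : vbar ∈ insert vbar e' := Finset.mem_insert_self _ _
        rw [if_pos h2, Finset.prod_insert hvb', Function.update_self, zero_mul]
  have himage := L.image_convexHull (MultilinearSet V' E')
  have hmem : L y ∈ convexHull ℝ (⇑L '' MultilinearSet V' E') :=
    himage ▸ Set.mem_image_of_mem L hy
  have : L y = fun e => if vbar ∈ e then (0:ℝ) else y e := funext fun e => hfapp y e
  exact this ▸ convexHull_mono himg hmem

end Aux

/-- lifting an inequality description of `MP(G')` to a description of `MP(G)`,
where `G` is obtained from `G' = (V', E')` by a new node `v̄`, the pair edges `{v, v̄}`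
(`v ∈ V'`) and the lifted edges `e ∪ {v̄}` (`e ∈ E'`). -/
theorem multilinear_polytope_lifting {V : Type} [Fintype V] [DecidableEq V]
    (V' : Finset V) (E' : Finset (Finset V))
    (hE' : ∀ e ∈ E', e ⊆ V' ∧ 2 ≤ e.card)
    (vbar : V) (hvbar : vbar ∉ V')
    {ι : Type} [Fintype ι]
    (a : ι → V → ℝ) (aE : ι → Finset V → ℝ) (α : ι → ℝ)
    (hdesc : convexHull ℝ (MultilinearSet V' E') =
      {z : Finset V → ℝ | ∀ i : ι,
        (∑ v ∈ V', a i v * z {v}) + (∑ e ∈ E', aE i e * z e) ≤ α i}) :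
    convexHull ℝ (MultilinearSet (insert vbar V')
        (E' ∪ V'.image (fun v => ({v, vbar} : Finset V)) ∪ E'.image (fun e => insert vbar e))) =
      {z : Finset V → ℝ |
        (0 ≤ z {vbar} ∧ z {vbar} ≤ 1) ∧
        (∀ i : ι, (∑ v ∈ V', a i v * z {v, vbar}) + (∑ e ∈ E', aE i e * z (insert vbar e)) ≤
            α i * z {vbar}) ∧
        ∀ i : ι, (∑ v ∈ V', a i v * (z {v} - z {v, vbar})) +
            (∑ e ∈ E', aE i e * (z e - z (insert vbar e))) ≤ α i * (1 - z {vbar})} := by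
  classical
  apply Set.Subset.antisymm
  · apply convexHull_min
    · rintro z ⟨x, hx, hxv, hxe⟩
      have hvmem : vbar ∈ insert vbar V' := Finset.mem_insert_self _ _
      have hzv : z {vbar} = x vbar := hxv vbar hvmem
      have hxb := hx vbar hvmem
      have hsing : ∀ v ∈ V', z {v} = x v := fun v hv => hxv v (Finset.mem_insert_of_mem hv)
      have hpair : ∀ v ∈ V', z {v, vbar} = x v * x vbar := by
        intro v hv
        have hne : v ≠ vbar := ne_of_mem_of_not_mem hv hvbar
        rw [hxe _ (Finset.mem_union_left _
          (Finset.mem_union_right _ (Finset.mem_image_of_mem _ hv))), Finset.prod_pair hne]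
      have hins : ∀ e ∈ E', z (insert vbar e) = x vbar * ∏ v ∈ e, x v := by
        intro e he
        have hvb : vbar ∉ e := fun h => hvbar ((hE' e he).1 h)
        rw [hxe _ (Finset.mem_union_right _ (Finset.mem_image_of_mem _ he)),
          Finset.prod_insert hvb]
      have hedge : ∀ e ∈ E', z e = ∏ v ∈ e, x v := fun e he =>
        hxe e (Finset.mem_union_left _ (Finset.mem_union_left _ he))
      have hP' : ∀ i, (∑ v ∈ V', a i v * x v) + (∑ e ∈ E', aE i e * ∏ w ∈ e, x w) ≤ α i := by
        have hz' : (fun e => ∏ w ∈ e, x w) ∈ MultilinearSet V' E' :=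
          ⟨x, fun v hv => hx v (Finset.mem_insert_of_mem hv),
            fun v _ => Finset.prod_singleton x v, fun e _ => rfl⟩
        have hmem := subset_convexHull ℝ _ hz'
        rw [hdesc] at hmem
        intro i
        simpa using hmem i
      refine ⟨⟨?_, ?_⟩, ?_, ?_⟩
      · rw [hzv]; rcases hxb with h | h <;> simp [h]
      · rw [hzv]; rcases hxb with h | h <;> simp [h]
      · intro i
        rcases hxb with h | h
        · have e1 : ∑ v ∈ V', a i v * z {v, vbar} = 0 :=
            Finset.sum_eq_zero fun v hv => by rw [hpair v hv, h, mul_zero, mul_zero]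
          have e2 : ∑ e ∈ E', aE i e * z (insert vbar e) = 0 :=
            Finset.sum_eq_zero fun e he => by rw [hins e he, h, zero_mul, mul_zero]
          rw [e1, e2, hzv, h, mul_zero, add_zero]
        · have e1 : ∑ v ∈ V', a i v * z {v, vbar} = ∑ v ∈ V', a i v * x v :=
            Finset.sum_congr rfl fun v hv => by rw [hpair v hv, h, mul_one]
          have e2 : ∑ e ∈ E', aE i e * z (insert vbar e) = ∑ e ∈ E', aE i e * ∏ w ∈ e, x w :=
            Finset.sum_congr rfl fun e he => by rw [hins e he, h, one_mul]
          rw [e1, e2, hzv, h, mul_one]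
          exact hP' i
      · intro i
        rcases hxb with h | h
        · have e1 : ∑ v ∈ V', a i v * (z {v} - z {v, vbar}) = ∑ v ∈ V', a i v * x v :=
            Finset.sum_congr rfl fun v hv => by
              rw [hsing v hv, hpair v hv, h, mul_zero, sub_zero]
          have e2 : ∑ e ∈ E', aE i e * (z e - z (insert vbar e))
              = ∑ e ∈ E', aE i e * ∏ w ∈ e, x w :=
            Finset.sum_congr rfl fun e he => by
              rw [hedge e he, hins e he, h, zero_mul, sub_zero]
          rw [e1, e2, hzv, h, sub_zero, mul_one]
          exact hP' i
        · have e1 : ∑ v ∈ V', a i v * (z {v} - z {v, vbar}) = 0 :=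
            Finset.sum_eq_zero fun v hv => by
              rw [hsing v hv, hpair v hv, h, mul_one, sub_self, mul_zero]
          have e2 : ∑ e ∈ E', aE i e * (z e - z (insert vbar e)) = 0 :=
            Finset.sum_eq_zero fun e he => by
              rw [hedge e he, hins e he, h, one_mul, sub_self, mul_zero]
          rw [e1, e2, hzv, h, sub_self, mul_zero, add_zero]
    · intro z1 hz1 z2 hz2 p q hp hq hpq
      obtain ⟨⟨h10, h11⟩, h12, h13⟩ := hz1
      obtain ⟨⟨h20, h21⟩, h22, h23⟩ := hz2
      have hsum : ∀ i : ι, p * α i + q * α i = α i := fun i => by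
        rw [← add_mul, hpq, one_mul]
      refine ⟨⟨?_, ?_⟩, ?_, ?_⟩
      · simp only [Pi.add_apply, Pi.smul_apply, smul_eq_mul]
        exact add_nonneg (mul_nonneg hp h10) (mul_nonneg hq h20)
      · simp only [Pi.add_apply, Pi.smul_apply, smul_eq_mul]
        calc p * z1 {vbar} + q * z2 {vbar} ≤ p * 1 + q * 1 :=
              add_le_add (mul_le_mul_of_nonneg_left h11 hp)
                (mul_le_mul_of_nonneg_left h21 hq)
          _ = 1 := by rw [mul_one, mul_one, hpq]
      · intro i
        simp only [Pi.add_apply, Pi.smul_apply, smul_eq_mul]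
        rw [sum_mul_combo, sum_mul_combo]
        linarith [mul_le_mul_of_nonneg_left (h12 i) hp,
          mul_le_mul_of_nonneg_left (h22 i) hq, hsum i]
      · intro i
        simp only [Pi.add_apply, Pi.smul_apply, smul_eq_mul]
        rw [sum_mul_combo', sum_mul_combo']
        linarith [mul_le_mul_of_nonneg_left (h13 i) hp,
          mul_le_mul_of_nonneg_left (h23 i) hq, hsum i]
  · intro z hz
    obtain ⟨⟨hz0, hz1⟩, hz2, hz3⟩ := hz
    have hpc : ∀ v : V, z {v, vbar} = z (insert vbar {v}) := fun v => by
      rw [Finset.pair_comm]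
    have h2' : ∀ i, (∑ v ∈ V', a i v * z (insert vbar {v}))
        + (∑ e ∈ E', aE i e * z (insert vbar e)) ≤ α i * z {vbar} := by
      intro i
      have e1 : ∑ v ∈ V', a i v * z (insert vbar {v}) = ∑ v ∈ V', a i v * z {v, vbar} :=
        Finset.sum_congr rfl fun v _ => by rw [hpc]
      rw [e1]; exact hz2 i
    have h3' : ∀ i, (∑ v ∈ V', a i v * (z {v} - z (insert vbar {v})))
        + (∑ e ∈ E', aE i e * (z e - z (insert vbar e))) ≤ α i * (1 - z {vbar}) := by
      intro i
      have e1 : ∑ v ∈ V', a i v * (z {v} - z (insert vbar {v}))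
          = ∑ v ∈ V', a i v * (z {v} - z {v, vbar}) :=
        Finset.sum_congr rfl fun v _ => by rw [hpc]
      rw [e1]; exact hz3 i
    rcases eq_or_lt_of_le hz0 with hl0 | hl0
    · -- z {vbar} = 0
      have h0 : z {vbar} = 0 := hl0.symm
      have hyt : ∀ t : ℝ, 0 ≤ t →
          (fun e => (z e - z (insert vbar e)) + t * z (insert vbar e))
            ∈ convexHull ℝ (MultilinearSet V' E') := by
        intro t ht
        rw [hdesc]
        intro i
        have eA : ∑ v ∈ V', a i v * ((z {v} - z (insert vbar {v})) + t * z (insert vbar {v}))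
            = (∑ v ∈ V', a i v * (z {v} - z (insert vbar {v})))
              + t * ∑ v ∈ V', a i v * z (insert vbar {v}) :=
          sum_mul_combo'' _ _ _ _ _
        have eB : ∑ e ∈ E', aE i e * ((z e - z (insert vbar e)) + t * z (insert vbar e))
            = (∑ e ∈ E', aE i e * (z e - z (insert vbar e)))
              + t * ∑ e ∈ E', aE i e * z (insert vbar e) :=
          sum_mul_combo'' _ _ _ _ _
        show (∑ v ∈ V', a i v * ((z {v} - z (insert vbar {v})) + t * z (insert vbar {v})))
            + (∑ e ∈ E', aE i e * ((z e - z (insert vbar e)) + t * z (insert vbar e))) ≤ α i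
        rw [eA, eB]
        have H2 := h2' i
        have H3 := h3' i
        rw [h0, mul_zero] at H2
        rw [h0, sub_zero, mul_one] at H3
        linarith [mul_le_mul_of_nonneg_left H2 ht]
      have hbnd := fun (t : ℝ) (ht : 0 ≤ t) =>
        hull_bounds V' E' (fun e he => (hE' e he).1) (hyt t ht)
      have huv : ∀ v ∈ V', z (insert vbar {v}) = 0 := fun v hv =>
        icc_linear_zero (fun t ht => (hbnd t ht).1 v hv)
      have hue : ∀ e ∈ E', z (insert vbar e) = 0 := fun e he =>
        icc_linear_zero (fun t ht => (hbnd t ht).2 e he)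
      have hy00 : (fun e => z e - z (insert vbar e)) ∈ convexHull ℝ (MultilinearSet V' E') := by
        simpa using hyt 0 le_rfl
      have hf0 := lift0_mem V' E' hE' vbar hvbar hy00
      refine memHull_congr _ _ hf0 ?_ ?_
      · intro v hv
        rcases Finset.mem_insert.1 hv with rfl | hv
        · simp [h0]
        · have hne : v ≠ vbar := ne_of_mem_of_not_mem hv hvbar
          have hni : vbar ∉ ({v} : Finset V) := by
            simp only [Finset.mem_singleton]; exact fun h => hne h.symm
          simp [hni, huv v hv]
      · intro e he
        rcases Finset.mem_union.1 he with he' | he'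
        · rcases Finset.mem_union.1 he' with heE | hePair
          · have hvb : vbar ∉ e := fun h => hvbar ((hE' e heE).1 h)
            simp [hvb, hue e heE]
          · obtain ⟨v, hv, rfl⟩ := Finset.mem_image.1 hePair
            have hin : vbar ∈ ({v, vbar} : Finset V) := by simp
            rw [hpc v]
            simp [hin, huv v hv]
        · obtain ⟨e', he'E, rfl⟩ := Finset.mem_image.1 he'
          have hin : vbar ∈ insert vbar e' := Finset.mem_insert_self _ _
          simp [hin, hue e' he'E]
    rcases eq_or_lt_of_le hz1 with hl1 | hl1
    · -- z {vbar} = 1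
      have hyt : ∀ t : ℝ, 0 ≤ t →
          (fun e => z (insert vbar e) + t * (z e - z (insert vbar e)))
            ∈ convexHull ℝ (MultilinearSet V' E') := by
        intro t ht
        rw [hdesc]
        intro i
        have eA : ∑ v ∈ V', a i v * (z (insert vbar {v}) + t * (z {v} - z (insert vbar {v})))
            = (∑ v ∈ V', a i v * z (insert vbar {v}))
              + t * ∑ v ∈ V', a i v * (z {v} - z (insert vbar {v})) :=
          sum_mul_combo'' _ _ _ _ _
        have eB : ∑ e ∈ E', aE i e * (z (insert vbar e) + t * (z e - z (insert vbar e)))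
            = (∑ e ∈ E', aE i e * z (insert vbar e))
              + t * ∑ e ∈ E', aE i e * (z e - z (insert vbar e)) :=
          sum_mul_combo'' _ _ _ _ _
        show (∑ v ∈ V', a i v * (z (insert vbar {v}) + t * (z {v} - z (insert vbar {v}))))
            + (∑ e ∈ E', aE i e * (z (insert vbar e) + t * (z e - z (insert vbar e)))) ≤ α i
        rw [eA, eB]
        have H2 := h2' i
        have H3 := h3' i
        rw [hl1, mul_one] at H2
        rw [hl1, sub_self, mul_zero] at H3
        linarith [mul_le_mul_of_nonneg_left H3 ht]
      have hbnd := fun (t : ℝ) (ht : 0 ≤ t) =>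
        hull_bounds V' E' (fun e he => (hE' e he).1) (hyt t ht)
      have huv : ∀ v ∈ V', z {v} - z (insert vbar {v}) = 0 := fun v hv =>
        icc_linear_zero (fun t ht => (hbnd t ht).1 v hv)
      have hue : ∀ e ∈ E', z e - z (insert vbar e) = 0 := fun e he =>
        icc_linear_zero (fun t ht => (hbnd t ht).2 e he)
      have hy10 : (fun e => z (insert vbar e)) ∈ convexHull ℝ (MultilinearSet V' E') := by
        simpa using hyt 0 le_rfl
      have hf1 := lift1_mem V' E' hE' vbar hvbar hy10
      refine memHull_congr _ _ hf1 ?_ ?_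
      · intro v hv
        rcases Finset.mem_insert.1 hv with rfl | hv
        · simp [hl1]
        · have hne : v ≠ vbar := ne_of_mem_of_not_mem hv hvbar
          have hns : ({v} : Finset V) ≠ {vbar} := by
            simp [Finset.singleton_inj, hne]
          have hni : vbar ∉ ({v} : Finset V) := by
            simp only [Finset.mem_singleton]; exact fun h => hne h.symm
          simp only [hns, hni, if_neg, if_false]
          linarith [huv v hv]
      · intro e he
        rcases Finset.mem_union.1 he with he' | he'
        · rcases Finset.mem_union.1 he' with heE | hePair
          · have hvb : vbar ∉ e := fun h => hvbar ((hE' e heE).1 h)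
            have hns : e ≠ {vbar} := by
              rintro rfl; exact hvb (Finset.mem_singleton_self vbar)
            simp [hns, hvb]
            linarith [hue e heE]
          · obtain ⟨v, hv, rfl⟩ := Finset.mem_image.1 hePair
            have hne : v ≠ vbar := ne_of_mem_of_not_mem hv hvbar
            have hin : vbar ∈ ({v, vbar} : Finset V) := by simp
            have hns : ({v, vbar} : Finset V) ≠ {vbar} := by
              intro h
              have : v ∈ ({vbar} : Finset V) := h ▸ (by simp)
              exact hne (by simpa using this)
            have herase : ({v, vbar} : Finset V).erase vbar = {v} := by
              rw [Finset.pair_comm]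
              exact Finset.erase_insert (by
                simp only [Finset.mem_singleton]; exact fun h => hne h.symm)
            rw [hpc v]
            simp [hin, hns, herase]
        · obtain ⟨e', he'E, rfl⟩ := Finset.mem_image.1 he'
          have hvb' : vbar ∉ e' := fun h => hvbar ((hE' e' he'E).1 h)
          have hin : vbar ∈ insert vbar e' := Finset.mem_insert_self _ _
          have hns : insert vbar e' ≠ {vbar} := by
            intro h
            obtain ⟨u, hu⟩ : e'.Nonempty := Finset.card_pos.1 (by
              have := (hE' e' he'E).2; omega)
            have hu' : u ∈ ({vbar} : Finset V) := h ▸ Finset.mem_insert_of_mem hu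
            exact hvb' ((Finset.mem_singleton.1 hu') ▸ hu)
          simp [hin, hns, Finset.erase_insert hvb']
    · -- 0 < z {vbar} < 1
      have hpos : (0:ℝ) < z {vbar} := hl0
      have hpos' : (0:ℝ) < 1 - z {vbar} := by linarith
      have hy1 : (fun e => z (insert vbar e) / z {vbar})
          ∈ convexHull ℝ (MultilinearSet V' E') := by
        rw [hdesc]
        intro i
        have eA : ∑ v ∈ V', a i v * (z (insert vbar {v}) / z {vbar})
            = (∑ v ∈ V', a i v * z (insert vbar {v})) / z {vbar} := sum_mul_div _ _ _ _
        have eB : ∑ e ∈ E', aE i e * (z (insert vbar e) / z {vbar})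
            = (∑ e ∈ E', aE i e * z (insert vbar e)) / z {vbar} := sum_mul_div _ _ _ _
        show (∑ v ∈ V', a i v * (z (insert vbar {v}) / z {vbar}))
            + (∑ e ∈ E', aE i e * (z (insert vbar e) / z {vbar})) ≤ α i
        rw [eA, eB, ← add_div, div_le_iff₀ hpos]
        exact h2' i
      have hy0 : (fun e => (z e - z (insert vbar e)) / (1 - z {vbar}))
          ∈ convexHull ℝ (MultilinearSet V' E') := by
        rw [hdesc]
        intro i
        have eA : ∑ v ∈ V', a i v * ((z {v} - z (insert vbar {v})) / (1 - z {vbar}))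
            = (∑ v ∈ V', a i v * (z {v} - z (insert vbar {v}))) / (1 - z {vbar}) :=
          sum_mul_div _ _ _ _
        have eB : ∑ e ∈ E', aE i e * ((z e - z (insert vbar e)) / (1 - z {vbar}))
            = (∑ e ∈ E', aE i e * (z e - z (insert vbar e))) / (1 - z {vbar}) :=
          sum_mul_div _ _ _ _
        show (∑ v ∈ V', a i v * ((z {v} - z (insert vbar {v})) / (1 - z {vbar})))
            + (∑ e ∈ E', aE i e * ((z e - z (insert vbar e)) / (1 - z {vbar}))) ≤ α i
        rw [eA, eB, ← add_div, div_le_iff₀ hpos']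
        exact h3' i
      have hm1 := lift1_mem V' E' hE' vbar hvbar hy1
      have hm0 := lift0_mem V' E' hE' vbar hvbar hy0
      have hcomb := (convex_convexHull ℝ (MultilinearSet (insert vbar V')
          (E' ∪ V'.image (fun v => ({v, vbar} : Finset V)) ∪ E'.image (fun e => insert vbar e))))
        hm1 hm0 (le_of_lt hpos) (le_of_lt hpos') (by ring)
      have hzeq : z = z {vbar} • (fun e => if e = ({vbar} : Finset V) then (1:ℝ)
            else if vbar ∈ e then z (insert vbar (e.erase vbar)) / z {vbar}
            else z (insert vbar e) / z {vbar})
          + (1 - z {vbar}) • (fun e => if vbar ∈ e then (0:ℝ)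
            else (z e - z (insert vbar e)) / (1 - z {vbar})) := by
        funext e
        simp only [Pi.add_apply, Pi.smul_apply, smul_eq_mul]
        by_cases h1 : e = ({vbar} : Finset V)
        · subst h1
          simp
        · by_cases h2 : vbar ∈ e
          · rw [if_neg h1, if_pos h2, if_pos h2, Finset.insert_erase h2,
              mul_zero, add_zero, mul_comm, div_mul_cancel₀ _ (ne_of_gt hpos)]
          · rw [if_neg h1, if_neg h2, if_neg h2]
            field_simp
            ring
      rw [hzeq]
      exact hcomb
end

section
/- Let G be a hypergraph, and let G_1, G_2 be section hypergraphs of G such that G_1 ∪ G_2 = G and G_1 ∩ G_2 is a complete hypergraph. Let C(G) be the set of points in the multilinear set S(G) that satisfy a number of additional constraints, each one containing only variables corresponding to nodes and edges lying entirely in G_1 or entirely in G_2, and for i = 1,2 let C(G_i) be the projection of C(G) onto the coordinates of G_i. Then C(G) is decomposable into C(G_1) and C(G_2): the convex hull of C(G) equals the set of points z whose restriction to the coordinates of G_1 lies in the convex hull of C(G_1) and whose restriction to the coordinates of G_2 lies in the convex hull of C(G_2). -/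
open Finset

/-- The coordinates of the hypergraph with node set `Vset` and edge set `E`:
singleton sets for nodes, and the edges themselves. -/
def coords {V : Type} [DecidableEq V] (Vset : Finset V) (E : Finset (Finset V)) :
    Finset (Finset V) :=
  Vset.image (fun v => ({v} : Finset V)) ∪ E

/-- A set of points depends only on the given coordinates. -/
def DependsOnlyOn {V : Type} [DecidableEq V] (A : Set (Finset V → ℝ))
    (c : Finset (Finset V)) : Prop :=
  ∀ z z' : Finset V → ℝ, (∀ p ∈ c, z p = z' p) → (z ∈ A ↔ z' ∈ A)


lemma moebius_zero {V : Type} [DecidableEq V] (W : Finset V) (δ : Finset V → ℝ)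
    (h : ∀ p ∈ W.powerset, ∑ R ∈ W.powerset.filter (fun R => p ⊆ R), δ R = 0) :
    ∀ R ∈ W.powerset, δ R = 0 := by
  suffices H : ∀ n : ℕ, ∀ R ∈ W.powerset, W.card ≤ R.card + n → δ R = 0 by
    intro R hR
    exact H W.card R hR (Nat.le_add_left _ _)
  intro n
  induction n with
  | zero =>
    intro R hR hc
    have hRW : R = W := Finset.eq_of_subset_of_card_le (Finset.mem_powerset.1 hR) (by omega)
    have hs := h R hR
    rw [Finset.sum_eq_single_of_mem R
      (Finset.mem_filter.2 ⟨hR, Finset.Subset.refl R⟩)] at hs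
    · exact hs
    · intro Q hQ hne
      exfalso
      simp only [Finset.mem_filter, Finset.mem_powerset] at hQ
      exact hne (Finset.Subset.antisymm (hRW ▸ hQ.1) hQ.2)
  | succ n ih =>
    intro R hR hc
    have hs := h R hR
    rw [Finset.sum_eq_single_of_mem R
      (Finset.mem_filter.2 ⟨hR, Finset.Subset.refl R⟩)] at hs
    · exact hs
    · intro Q hQ hne
      simp only [Finset.mem_filter, Finset.mem_powerset] at hQ
      apply ih Q (Finset.mem_powerset.2 hQ.1)
      have hss : R ⊂ Q := Finset.ssubset_iff_subset_ne.2 ⟨hQ.2, fun h => hne h.symm⟩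
      have := Finset.card_lt_card hss
      omega

lemma pattern_of_mem {V : Type} [DecidableEq V] (Vset V' : Finset V) (E E' : Finset (Finset V))
    (hV' : V' ⊆ Vset) (hE' : ∀ e ∈ E', e ∈ E ∧ e ⊆ V') (z0 : Finset V → ℝ)
    (hz0 : z0 ∈ MultilinearSet Vset E) :
    ∃ T : Finset V, T ⊆ V' ∧ ∀ p ∈ coords V' E', z0 p = if p ⊆ T then 1 else 0 := by
  obtain ⟨x, hx01, hxs, hxe⟩ := hz0
  refine ⟨V'.filter (fun v => x v = 1), Finset.filter_subset _ _, ?_⟩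
  intro p hp
  simp only [coords, Finset.mem_union] at hp
  rcases hp with hp | hp
  · obtain ⟨v, hv, rfl⟩ := Finset.mem_image.1 hp
    rw [hxs v (hV' hv)]
    by_cases h1 : x v = 1
    · simp [h1, Finset.singleton_subset_iff, Finset.mem_filter, hv]
    · rcases hx01 v (hV' hv) with h0 | h0
      · simp [h0, Finset.singleton_subset_iff, Finset.mem_filter, hv]
      · exact absurd h0 h1
  · obtain ⟨hpE, hpV⟩ := hE' p hp
    rw [hxe p hpE]
    have hprod : ∏ v ∈ p, x v
        = ∏ v ∈ p, (if v ∈ V'.filter (fun u => x u = 1) then (1:ℝ) else 0) := by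
      apply Finset.prod_congr rfl
      intro v hv
      rcases hx01 v (hV' (hpV hv)) with h0 | h1
      · simp [Finset.mem_filter, h0, hpV hv]
      · simp [Finset.mem_filter, h1, hpV hv]
    rw [hprod, Finset.prod_boole]
    by_cases hsub : p ⊆ V'.filter (fun u => x u = 1)
    · rw [if_pos hsub, if_pos (fun v hv => hsub hv)]
    · rw [if_neg hsub, if_neg (fun hall => hsub (fun v hv => hall v hv))]

/-- constrained decomposition of multilinear sets. Here the constrained set is
`C(G) = S(G) ∩ ⋂ᵢ Aᵢ`, where each constraint `Aᵢ` involves only the variables of `G₁` or only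
those of `G₂`, and `C(Gᵢ)` is the projection of `C(G)` onto the coordinates of `Gᵢ`. -/
theorem constrained_decomposition {V : Type} [Fintype V] [DecidableEq V]
    (Vset V1 V2 : Finset V) (E : Finset (Finset V))
    (hcard : ∀ e ∈ E, 2 ≤ e.card) (hsub : ∀ e ∈ E, e ⊆ Vset)
    (hV1 : V1 ⊆ Vset) (hV2 : V2 ⊆ Vset)
    (hVunion : V1 ∪ V2 = Vset)
    (hEunion : (E.filter fun e => e ⊆ V1) ∪ (E.filter fun e => e ⊆ V2) = E)
    (hcomplete : ∀ e : Finset V, e ⊆ V1 ∩ V2 → 2 ≤ e.card → e ∈ E)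
    {ι : Type} (A : ι → Set (Finset V → ℝ))
    (hA : ∀ i : ι, DependsOnlyOn (A i) (coords V1 (E.filter fun e => e ⊆ V1)) ∨
        DependsOnlyOn (A i) (coords V2 (E.filter fun e => e ⊆ V2))) :
    convexHull ℝ (MultilinearSet Vset E ∩ ⋂ i : ι, A i) =
      convexHull ℝ {z' | ∃ z ∈ MultilinearSet Vset E ∩ ⋂ i : ι, A i,
          ∀ p ∈ coords V1 (E.filter fun e => e ⊆ V1), z' p = z p} ∩
        convexHull ℝ {z' | ∃ z ∈ MultilinearSet Vset E ∩ ⋂ i : ι, A i,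
          ∀ p ∈ coords V2 (E.filter fun e => e ⊆ V2), z' p = z p} := by
  classical
  set E1 : Finset (Finset V) := E.filter (fun e => e ⊆ V1) with hE1def
  set E2 : Finset (Finset V) := E.filter (fun e => e ⊆ V2) with hE2def
  set c1 : Finset (Finset V) := coords V1 E1 with hc1def
  set c2 : Finset (Finset V) := coords V2 E2 with hc2def
  set C : Set (Finset V → ℝ) := MultilinearSet Vset E ∩ ⋂ i : ι, A i with hCdef
  set W : Finset V := V1 ∩ V2 with hWdef
  have hc1sub : ∀ p ∈ c1, p ⊆ V1 := by
    intro p hp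
    rw [hc1def] at hp
    simp only [coords, Finset.mem_union] at hp
    rcases hp with hp | hp
    · obtain ⟨v, hv, rfl⟩ := Finset.mem_image.1 hp
      simpa using hv
    · exact (Finset.mem_filter.1 hp).2
  have hc2sub : ∀ p ∈ c2, p ⊆ V2 := by
    intro p hp
    rw [hc2def] at hp
    simp only [coords, Finset.mem_union] at hp
    rcases hp with hp | hp
    · obtain ⟨v, hv, rfl⟩ := Finset.mem_image.1 hp
      simpa using hv
    · exact (Finset.mem_filter.1 hp).2
  have hmemc : ∀ p : Finset V, p ⊆ W → p.Nonempty → p ∈ c1 ∧ p ∈ c2 := by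
    intro p hpW hpne
    rcases Nat.lt_or_ge p.card 2 with hcd | hcd
    · have hone : p.card = 1 := by
        have := Finset.card_pos.2 hpne; omega
      obtain ⟨v, rfl⟩ := Finset.card_eq_one.1 hone
      have hv : v ∈ W := hpW (Finset.mem_singleton_self v)
      rw [hWdef] at hv
      constructor
      · rw [hc1def]
        simp only [coords, Finset.mem_union]
        exact Or.inl (Finset.mem_image.2 ⟨v, (Finset.mem_inter.1 hv).1, rfl⟩)
      · rw [hc2def]
        simp only [coords, Finset.mem_union]
        exact Or.inl (Finset.mem_image.2 ⟨v, (Finset.mem_inter.1 hv).2, rfl⟩)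
    · have hpE : p ∈ E := hcomplete p hpW hcd
      have hpW' : p ⊆ V1 ∩ V2 := by rw [← hWdef]; exact hpW
      constructor
      · rw [hc1def]
        simp only [coords, Finset.mem_union]
        right
        rw [hE1def]
        exact Finset.mem_filter.2 ⟨hpE, hpW'.trans Finset.inter_subset_left⟩
      · rw [hc2def]
        simp only [coords, Finset.mem_union]
        right
        rw [hE2def]
        exact Finset.mem_filter.2 ⟨hpE, hpW'.trans Finset.inter_subset_right⟩
  apply Set.Subset.antisymm
  · apply Set.subset_inter
    · exact convexHull_mono (fun z hz => ⟨z, hz, fun p _ => rfl⟩)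
    · exact convexHull_mono (fun z hz => ⟨z, hz, fun p _ => rfl⟩)
  rintro z ⟨hz1, hz2⟩
  rw [_root_.convexHull_eq] at hz1 hz2
  obtain ⟨ι₁, s, lam, u, hlam0, hlam1, hu, hcm1⟩ := hz1
  obtain ⟨ι₂, t, mu, w, hmu0, hmu1, hw, hcm2⟩ := hz2
  -- extract patterns for side 1
  have hpoint1 : ∀ k : ι₁, ∃ T : Finset V, k ∈ s → (T ⊆ V1 ∧
      (∀ p ∈ c1, u k p = if p ⊆ T then 1 else 0) ∧
      (∀ y : Finset V → ℝ, (∀ p ∈ c1, y p = if p ⊆ T then 1 else 0) →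
        ∀ i, DependsOnlyOn (A i) c1 → y ∈ A i)) := by
    intro k
    by_cases hk : k ∈ s
    · obtain ⟨z0, hz0C, hz0agree⟩ := hu k hk
      have hE1' : ∀ e ∈ E1, e ∈ E ∧ e ⊆ V1 := by
        intro e he; rw [hE1def] at he
        exact ⟨(Finset.mem_filter.1 he).1, (Finset.mem_filter.1 he).2⟩
      obtain ⟨T, hTsub, hTpat⟩ := pattern_of_mem Vset V1 E E1 hV1 hE1' z0 hz0C.1
      rw [← hc1def] at hTpat
      refine ⟨T, fun _ => ⟨hTsub, ?_, ?_⟩⟩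
      · intro p hp; rw [hz0agree p hp, hTpat p hp]
      · intro y hy i hdep
        exact (hdep y z0 (fun p hp => by rw [hy p hp, hTpat p hp])).2
          (Set.mem_iInter.1 hz0C.2 i)
    · exact ⟨∅, fun h => absurd h hk⟩
  choose T hT using hpoint1
  have hpoint2 : ∀ l : ι₂, ∃ U : Finset V, l ∈ t → (U ⊆ V2 ∧
      (∀ p ∈ c2, w l p = if p ⊆ U then 1 else 0) ∧
      (∀ y : Finset V → ℝ, (∀ p ∈ c2, y p = if p ⊆ U then 1 else 0) →
        ∀ i, DependsOnlyOn (A i) c2 → y ∈ A i)) := by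
    intro l
    by_cases hl : l ∈ t
    · obtain ⟨z0, hz0C, hz0agree⟩ := hw l hl
      have hE2' : ∀ e ∈ E2, e ∈ E ∧ e ⊆ V2 := by
        intro e he; rw [hE2def] at he
        exact ⟨(Finset.mem_filter.1 he).1, (Finset.mem_filter.1 he).2⟩
      obtain ⟨U, hUsub, hUpat⟩ := pattern_of_mem Vset V2 E E2 hV2 hE2' z0 hz0C.1
      rw [← hc2def] at hUpat
      refine ⟨U, fun _ => ⟨hUsub, ?_, ?_⟩⟩
      · intro p hp; rw [hz0agree p hp, hUpat p hp]
      · intro y hy i hdep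
        exact (hdep y z0 (fun p hp => by rw [hy p hp, hUpat p hp])).2
          (Set.mem_iInter.1 hz0C.2 i)
    · exact ⟨∅, fun h => absurd h hl⟩
  choose U hU using hpoint2
  -- representation of z on the two coordinate sets
  have hzrep1 : z = ∑ k ∈ s, lam k • u k := by
    rw [← hcm1, Finset.centerMass_eq_of_sum_1 _ _ hlam1]
  have hzrep2 : z = ∑ l ∈ t, mu l • w l := by
    rw [← hcm2, Finset.centerMass_eq_of_sum_1 _ _ hmu1]
  have hzp1 : ∀ p ∈ c1, z p = ∑ k ∈ s, lam k * (if p ⊆ T k then 1 else 0) := by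
    intro p hp
    conv_lhs => rw [hzrep1]
    rw [Finset.sum_apply]
    exact Finset.sum_congr rfl (fun k hk => by
      rw [Pi.smul_apply, smul_eq_mul, (hT k hk).2.1 p hp])
  have hzp2 : ∀ p ∈ c2, z p = ∑ l ∈ t, mu l * (if p ⊆ U l then 1 else 0) := by
    intro p hp
    conv_lhs => rw [hzrep2]
    rw [Finset.sum_apply]
    exact Finset.sum_congr rfl (fun l hl => by
      rw [Pi.smul_apply, smul_eq_mul, (hU l hl).2.1 p hp])
  -- the fiber weights
  set ν : Finset V → ℝ := fun R => ∑ k ∈ s.filter (fun k => T k ∩ W = R), lam k with hνdef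
  set ν' : Finset V → ℝ := fun R => ∑ l ∈ t.filter (fun l => U l ∩ W = R), mu l with hν'def
  have hν1 : ∀ p ∈ W.powerset, ∑ R ∈ W.powerset.filter (fun R => p ⊆ R), ν R
      = ∑ k ∈ s, lam k * (if p ⊆ T k then 1 else 0) := by
    intro p hp
    have hpW : p ⊆ W := Finset.mem_powerset.1 hp
    rw [hνdef]
    rw [Finset.sum_fiberwise_eq_sum_filter s (W.powerset.filter (fun R => p ⊆ R))
      (fun k => T k ∩ W) lam, Finset.sum_filter]
    apply Finset.sum_congr rfl
    intro k _
    have hcond : (T k ∩ W ∈ W.powerset.filter (fun R => p ⊆ R)) ↔ p ⊆ T k := by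
      simp only [Finset.mem_filter, Finset.mem_powerset]
      constructor
      · rintro ⟨-, h2⟩; exact h2.trans Finset.inter_subset_left
      · intro h; exact ⟨Finset.inter_subset_right, Finset.subset_inter h hpW⟩
    by_cases hc : p ⊆ T k
    · rw [if_pos (hcond.2 hc), if_pos hc, mul_one]
    · rw [if_neg (fun hm => hc (hcond.1 hm)), if_neg hc, mul_zero]
  have hν2 : ∀ p ∈ W.powerset, ∑ R ∈ W.powerset.filter (fun R => p ⊆ R), ν' R
      = ∑ l ∈ t, mu l * (if p ⊆ U l then 1 else 0) := by
    intro p hp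
    have hpW : p ⊆ W := Finset.mem_powerset.1 hp
    rw [hν'def]
    rw [Finset.sum_fiberwise_eq_sum_filter t (W.powerset.filter (fun R => p ⊆ R))
      (fun l => U l ∩ W) mu, Finset.sum_filter]
    apply Finset.sum_congr rfl
    intro l _
    have hcond : (U l ∩ W ∈ W.powerset.filter (fun R => p ⊆ R)) ↔ p ⊆ U l := by
      simp only [Finset.mem_filter, Finset.mem_powerset]
      constructor
      · rintro ⟨-, h2⟩; exact h2.trans Finset.inter_subset_left
      · intro h; exact ⟨Finset.inter_subset_right, Finset.subset_inter h hpW⟩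
    by_cases hc : p ⊆ U l
    · rw [if_pos (hcond.2 hc), if_pos hc, mul_one]
    · rw [if_neg (fun hm => hc (hcond.1 hm)), if_neg hc, mul_zero]
  have hνν' : ∀ R ∈ W.powerset, ν R = ν' R := by
    intro R hR
    have hδ : ∀ p ∈ W.powerset,
        ∑ Q ∈ W.powerset.filter (fun Q => p ⊆ Q), (ν Q - ν' Q) = 0 := by
      intro p hp
      rw [Finset.sum_sub_distrib, hν1 p hp, hν2 p hp]
      rcases p.eq_empty_or_nonempty with rfl | hpne
      · simp only [Finset.empty_subset, if_true, mul_one]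
        rw [hlam1, hmu1, sub_self]
      · obtain ⟨hp1, hp2⟩ := hmemc p (Finset.mem_powerset.1 hp) hpne
        rw [← hzp1 p hp1, ← hzp2 p hp2, sub_self]
    have h0 := moebius_zero W (fun Q => ν Q - ν' Q) hδ R hR
    simp only [sub_eq_zero] at h0
    exact h0
  -- bounds
  have hνnn : ∀ R : Finset V, 0 ≤ ν R := by
    intro R
    rw [hνdef]
    exact Finset.sum_nonneg (fun k hk => hlam0 k (Finset.mem_filter.1 hk).1)
  have hlamν : ∀ k ∈ s, lam k ≤ ν (T k ∩ W) := by
    intro k hk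
    rw [hνdef]
    exact Finset.single_le_sum (fun j hj => hlam0 j (Finset.mem_filter.1 hj).1)
      (Finset.mem_filter.2 ⟨hk, rfl⟩)
  have hmuν : ∀ l ∈ t, mu l ≤ ν (U l ∩ W) := by
    intro l hl
    rw [hνν' (U l ∩ W) (Finset.mem_powerset.2 Finset.inter_subset_right), hν'def]
    exact Finset.single_le_sum (fun j hj => hmu0 j (Finset.mem_filter.1 hj).1)
      (Finset.mem_filter.2 ⟨hl, rfl⟩)
  -- the glued combination
  set P : Finset (ι₁ × ι₂) := (s ×ˢ t).filter (fun kl => U kl.2 ∩ W = T kl.1 ∩ W) with hPdef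
  set ω : ι₁ × ι₂ → ℝ := fun kl => lam kl.1 * mu kl.2 / ν (T kl.1 ∩ W) with hωdef
  set y : ι₁ × ι₂ → Finset V → ℝ := fun kl p =>
    if p ∈ c1 ∪ c2 then (if p ⊆ T kl.1 ∪ U kl.2 then 1 else 0) else z p with hydef
  have hsplit : ∀ f : ι₁ × ι₂ → ℝ, ∑ kl ∈ P, f kl
      = ∑ k ∈ s, ∑ l ∈ t.filter (fun l => U l ∩ W = T k ∩ W), f (k, l) := by
    intro f
    rw [hPdef, Finset.sum_filter, Finset.sum_product]
    exact Finset.sum_congr rfl (fun k _ => (Finset.sum_filter _ _).symm)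
  have hsplit' : ∀ f : ι₁ × ι₂ → ℝ, ∑ kl ∈ P, f kl
      = ∑ l ∈ t, ∑ k ∈ s.filter (fun k => U l ∩ W = T k ∩ W), f (k, l) := by
    intro f
    rw [hPdef, Finset.sum_filter, Finset.sum_product_right]
    exact Finset.sum_congr rfl (fun l _ => (Finset.sum_filter _ _).symm)
  have hterm1 : ∀ k ∈ s,
      ∑ l ∈ t.filter (fun l => U l ∩ W = T k ∩ W), ω (k, l) = lam k := by
    intro k hk
    have hfib : ∑ l ∈ t.filter (fun l => U l ∩ W = T k ∩ W), mu l = ν (T k ∩ W) := by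
      rw [hνν' (T k ∩ W) (Finset.mem_powerset.2 Finset.inter_subset_right), hν'def]
    have : ∑ l ∈ t.filter (fun l => U l ∩ W = T k ∩ W), ω (k, l)
        = lam k * (∑ l ∈ t.filter (fun l => U l ∩ W = T k ∩ W), mu l) / ν (T k ∩ W) := by
      rw [Finset.mul_sum, Finset.sum_div]
    rw [this, hfib]
    by_cases h0 : ν (T k ∩ W) = 0
    · have hl0 : lam k = 0 := le_antisymm (h0 ▸ hlamν k hk) (hlam0 k hk)
      rw [hl0, zero_mul, zero_div]
    · rw [mul_div_assoc, div_self h0, mul_one]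
  have hterm2 : ∀ l ∈ t,
      ∑ k ∈ s.filter (fun k => U l ∩ W = T k ∩ W), ω (k, l) = mu l := by
    intro l hl
    have hcongr : ∑ k ∈ s.filter (fun k => U l ∩ W = T k ∩ W), ω (k, l)
        = ∑ k ∈ s.filter (fun k => U l ∩ W = T k ∩ W), lam k * mu l / ν (U l ∩ W) := by
      apply Finset.sum_congr rfl
      intro k hk
      have := (Finset.mem_filter.1 hk).2
      rw [hωdef]
      simp only
      rw [← this]
    have hfib : ∑ k ∈ s.filter (fun k => U l ∩ W = T k ∩ W), lam k = ν (U l ∩ W) := by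
      rw [hνdef]
      apply Finset.sum_congr _ (fun _ _ => rfl)
      apply Finset.filter_congr
      intro k _
      simp [eq_comm]
    have h2 : ∑ k ∈ s.filter (fun k => U l ∩ W = T k ∩ W), lam k * mu l / ν (U l ∩ W)
        = (∑ k ∈ s.filter (fun k => U l ∩ W = T k ∩ W), lam k) * mu l / ν (U l ∩ W) := by
      rw [Finset.sum_mul, Finset.sum_div]
    rw [hcongr, h2, hfib]
    by_cases h0 : ν (U l ∩ W) = 0
    · have hm0 : mu l = 0 := le_antisymm (h0 ▸ hmuν l hl) (hmu0 l hl)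
      rw [hm0, mul_zero, zero_div]
    · rw [mul_comm, mul_div_assoc, div_self h0, mul_one]
  have hωsum : ∑ kl ∈ P, ω kl = 1 := by
    rw [hsplit ω]
    rw [Finset.sum_congr rfl (fun k hk => hterm1 k hk)]
    exact hlam1
  have hωnn : ∀ kl ∈ P, 0 ≤ ω kl := by
    intro kl hkl
    rw [hPdef] at hkl
    obtain ⟨hks, hlt⟩ := Finset.mem_product.1 (Finset.mem_filter.1 hkl).1
    exact div_nonneg (mul_nonneg (hlam0 _ hks) (hmu0 _ hlt)) (hνnn _)
  -- values of the glued points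
  have hyval1 : ∀ kl ∈ P, ∀ p ∈ c1, y kl p = if p ⊆ T kl.1 then 1 else 0 := by
    rintro ⟨k, l⟩ hkl p hp
    rw [hPdef] at hkl
    have hmem := Finset.mem_filter.1 hkl
    obtain ⟨hks, hlt⟩ := Finset.mem_product.1 hmem.1
    have hmatch : U l ∩ W = T k ∩ W := hmem.2
    have hUl : U l ⊆ V2 := (hU l hlt).1
    have hkey : p ⊆ T k ∪ U l ↔ p ⊆ T k := by
      constructor
      · intro h v hv
        rcases Finset.mem_union.1 (h hv) with h1 | h1
        · exact h1
        · have hvW : v ∈ U l ∩ W := Finset.mem_inter.2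
            ⟨h1, by rw [hWdef]; exact Finset.mem_inter.2 ⟨hc1sub p hp hv, hUl h1⟩⟩
          rw [hmatch] at hvW
          exact (Finset.mem_inter.1 hvW).1
      · intro h; exact h.trans Finset.subset_union_left
    rw [hydef]
    simp only
    rw [if_pos (Finset.mem_union_left _ hp)]
    by_cases h : p ⊆ T k
    · rw [if_pos (hkey.2 h), if_pos h]
    · rw [if_neg (fun hh => h (hkey.1 hh)), if_neg h]
  have hyval2 : ∀ kl ∈ P, ∀ p ∈ c2, y kl p = if p ⊆ U kl.2 then 1 else 0 := by
    rintro ⟨k, l⟩ hkl p hp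
    rw [hPdef] at hkl
    have hmem := Finset.mem_filter.1 hkl
    obtain ⟨hks, hlt⟩ := Finset.mem_product.1 hmem.1
    have hmatch : U l ∩ W = T k ∩ W := hmem.2
    have hTk : T k ⊆ V1 := (hT k hks).1
    have hkey : p ⊆ T k ∪ U l ↔ p ⊆ U l := by
      constructor
      · intro h v hv
        rcases Finset.mem_union.1 (h hv) with h1 | h1
        · have hvW : v ∈ T k ∩ W := Finset.mem_inter.2
            ⟨h1, by rw [hWdef]; exact Finset.mem_inter.2 ⟨hTk h1, hc2sub p hp hv⟩⟩
          rw [← hmatch] at hvW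
          exact (Finset.mem_inter.1 hvW).1
        · exact h1
      · intro h; exact h.trans Finset.subset_union_right
    rw [hydef]
    simp only
    rw [if_pos (Finset.mem_union_right _ hp)]
    by_cases h : p ⊆ U l
    · rw [if_pos (hkey.2 h), if_pos h]
    · rw [if_neg (fun hh => h (hkey.1 hh)), if_neg h]
  -- the glued points are feasible
  have hymem : ∀ kl ∈ P, y kl ∈ C := by
    rintro ⟨k, l⟩ hkl
    have hkl' := hkl
    rw [hPdef] at hkl'
    have hmem := Finset.mem_filter.1 hkl'
    obtain ⟨hks, hlt⟩ := Finset.mem_product.1 hmem.1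
    constructor
    · refine ⟨fun v => if v ∈ T k ∪ U l then 1 else 0, fun v _ => ?_, fun v hv => ?_, fun e he => ?_⟩
      · by_cases h : v ∈ T k ∪ U l <;> simp [h]
      · have hvc : ({v} : Finset V) ∈ c1 ∪ c2 := by
          have hv' : v ∈ V1 ∪ V2 := by rw [hVunion]; exact hv
          rcases Finset.mem_union.1 hv' with h | h
          · apply Finset.mem_union_left
            rw [hc1def]
            simp only [coords, Finset.mem_union]
            exact Or.inl (Finset.mem_image.2 ⟨v, h, rfl⟩)
          · apply Finset.mem_union_right
            rw [hc2def]
            simp only [coords, Finset.mem_union]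
            exact Or.inl (Finset.mem_image.2 ⟨v, h, rfl⟩)
        rw [hydef]
        simp only
        rw [if_pos hvc]
        by_cases h : v ∈ T k ∪ U l
        · rw [if_pos h, if_pos (Finset.singleton_subset_iff.2 h)]
        · rw [if_neg h, if_neg (fun hh => h (Finset.singleton_subset_iff.1 hh))]
      · have hec : e ∈ c1 ∪ c2 := by
          have he' : e ∈ E1 ∪ E2 := by rw [hEunion]; exact he
          rcases Finset.mem_union.1 he' with h | h
          · apply Finset.mem_union_left
            rw [hc1def]
            simp only [coords, Finset.mem_union]
            exact Or.inr h
          · apply Finset.mem_union_right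
            rw [hc2def]
            simp only [coords, Finset.mem_union]
            exact Or.inr h
        rw [hydef]
        simp only
        rw [if_pos hec, Finset.prod_boole]
        by_cases h : e ⊆ T k ∪ U l
        · rw [if_pos h, if_pos (fun v hv => h hv)]
        · rw [if_neg h, if_neg (fun hall => h (fun v hv => hall v hv))]
    · apply Set.mem_iInter.2
      intro i
      rcases hA i with hdep | hdep
      · exact (hT k hks).2.2 (y (k, l)) (fun p hp => hyval1 (k, l) hkl p hp) i hdep
      · exact (hU l hlt).2.2 (y (k, l)) (fun p hp => hyval2 (k, l) hkl p hp) i hdep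
  -- the glued combination equals z
  have hfinal : ∑ kl ∈ P, ω kl • y kl = z := by
    funext p
    rw [Finset.sum_apply]
    by_cases hp1 : p ∈ c1
    · calc ∑ kl ∈ P, (ω kl • y kl) p
          = ∑ kl ∈ P, ω kl * (if p ⊆ T kl.1 then 1 else 0) :=
            Finset.sum_congr rfl (fun kl hkl => by
              rw [Pi.smul_apply, smul_eq_mul, hyval1 kl hkl p hp1])
        _ = ∑ k ∈ s, ∑ l ∈ t.filter (fun l => U l ∩ W = T k ∩ W),
              ω (k, l) * (if p ⊆ T k then 1 else 0) :=
            hsplit (fun kl => ω kl * (if p ⊆ T kl.1 then 1 else 0))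
        _ = ∑ k ∈ s, lam k * (if p ⊆ T k then 1 else 0) :=
            Finset.sum_congr rfl (fun k hk => by rw [← Finset.sum_mul, hterm1 k hk])
        _ = z p := (hzp1 p hp1).symm
    by_cases hp2 : p ∈ c2
    · calc ∑ kl ∈ P, (ω kl • y kl) p
          = ∑ kl ∈ P, ω kl * (if p ⊆ U kl.2 then 1 else 0) :=
            Finset.sum_congr rfl (fun kl hkl => by
              rw [Pi.smul_apply, smul_eq_mul, hyval2 kl hkl p hp2])
        _ = ∑ l ∈ t, ∑ k ∈ s.filter (fun k => U l ∩ W = T k ∩ W),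
              ω (k, l) * (if p ⊆ U l then 1 else 0) :=
            hsplit' (fun kl => ω kl * (if p ⊆ U kl.2 then 1 else 0))
        _ = ∑ l ∈ t, mu l * (if p ⊆ U l then 1 else 0) :=
            Finset.sum_congr rfl (fun l hl => by rw [← Finset.sum_mul, hterm2 l hl])
        _ = z p := (hzp2 p hp2).symm
    · have hyz : ∀ kl ∈ P, (ω kl • y kl) p = ω kl * z p := by
        intro kl hkl
        rw [Pi.smul_apply, smul_eq_mul, hydef]
        simp only
        rw [if_neg (fun h => (Finset.mem_union.1 h).elim hp1 hp2)]
      rw [Finset.sum_congr rfl hyz, ← Finset.sum_mul, hωsum, one_mul]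
  rw [← hfinal, ← Finset.centerMass_eq_of_sum_1 P y hωsum]
  exact Finset.centerMass_mem_convexHull P hωnn (by rw [hωsum]; norm_num) hymem
end

section
/- Let 𝒞 be the set of maximal cliques of a binary undirected graphical model, let G_C be the complete hypergraph with node set C, and let G = ∪_{C∈𝒞} G_C. Let S^e(G) = {z ∈ S(G) : ∑_{∅ ≠ p ⊆ C} (−2)^{|p|−1} z_p = 0 for all C ∈ 𝒞} and let MP^e(G) be its convex hull. If 𝒞 has the running intersection property, then MP^e(G) equals the set of points z such that for every C ∈ 𝒞 the restriction of z to the coordinates indexed by nonempty subsets of C lies in MP(G_C) ∩ H_C, where H_C := {z : ∑_{∅ ≠ p ⊆ C} (−2)^{|p|−1} z_p = 0}. -/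
open Finset

/-- The linearized parity form of a clique `C`: `∑_{∅ ≠ p ⊆ C} (−2)^{|p|−1} z_p`. -/
def parityForm {V : Type} [DecidableEq V] (C : Finset V) (z : Finset V → ℝ) : ℝ :=
  ∑ p ∈ C.powerset.filter fun p => p.Nonempty, (-2 : ℝ) ^ (p.card - 1) * z p

set_option linter.unusedSectionVars false
set_option maxHeartbeats 1000000
namespace PG
variable {V : Type} [Fintype V] [DecidableEq V]

noncomputable def marg (A : Finset V) (w : Finset V → ℝ) (t : Finset V) : ℝ :=
  ∑ s : Finset V, if s ∩ A = t then w s else 0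

noncomputable def mom (w : Finset V → ℝ) (p : Finset V) : ℝ :=
  ∑ s : Finset V, if p ⊆ s then w s else 0

lemma marg_nonneg {A : Finset V} {w : Finset V → ℝ} (hw : ∀ s, 0 ≤ w s) (t : Finset V) :
    0 ≤ marg A w t :=
  Finset.sum_nonneg fun s _ => by split <;> [exact hw s; exact le_rfl]

lemma marg_supp {A : Finset V} {w : Finset V → ℝ} {t : Finset V} (h : marg A w t ≠ 0) :
    t ⊆ A := by
  by_contra hts
  refine h (Finset.sum_eq_zero fun s _ => if_neg (fun he => hts ?_))
  rw [← he]; exact inter_subset_right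

lemma single_le_marg {A : Finset V} {w : Finset V → ℝ} (hw : ∀ s, 0 ≤ w s) (s : Finset V) :
    w s ≤ marg A w (s ∩ A) := by
  have := Finset.single_le_sum (f := fun s' => if s' ∩ A = s ∩ A then w s' else 0)
    (fun i _ => by by_cases h : i ∩ A = s ∩ A <;> simp [h, hw i]) (Finset.mem_univ s)
  simpa [marg] using this

lemma ite_sum {P : Prop} [Decidable P] {α : Type*} (u : Finset α) (f : α → ℝ) :
    (if P then ∑ x ∈ u, f x else 0) = ∑ x ∈ u, if P then f x else 0 := by
  split <;> simp

lemma marg_mass (A : Finset V) (w : Finset V → ℝ) :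
    ∑ t : Finset V, marg A w t = ∑ s : Finset V, w s := by
  unfold marg
  rw [Finset.sum_comm]
  exact Finset.sum_congr rfl fun s _ => by simp

lemma marg_marg {D A : Finset V} (hDA : D ⊆ A) (w : Finset V → ℝ) :
    marg D (marg A w) = marg D w := by
  funext t
  unfold marg
  simp only [ite_sum]
  rw [Finset.sum_comm]
  refine Finset.sum_congr rfl fun s _ => ?_
  rw [Finset.sum_eq_single (s ∩ A)]
  · have h2 : s ∩ A ∩ D = s ∩ D := by
      rw [inter_assoc, inter_eq_right.mpr hDA]
    simp [h2]
  · intro b _ hb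
    simp [Ne.symm hb]
  · intro h; exact absurd (Finset.mem_univ _) h

lemma mom_marg {A p : Finset V} (hpA : p ⊆ A) (w : Finset V → ℝ) :
    mom (marg A w) p = mom w p := by
  unfold mom marg
  simp only [ite_sum]
  rw [Finset.sum_comm]
  refine Finset.sum_congr rfl fun s _ => ?_
  rw [Finset.sum_eq_single (s ∩ A)]
  · have h2 : p ⊆ s ∩ A ↔ p ⊆ s :=
      ⟨fun h => h.trans inter_subset_left, fun h => subset_inter h hpA⟩
    simp [h2]
  · intro b _ hb
    simp [Ne.symm hb]
  · intro h; exact absurd (Finset.mem_univ _) h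

lemma mom_empty (w : Finset V → ℝ) : mom w ∅ = ∑ s : Finset V, w s := by
  unfold mom; exact Finset.sum_congr rfl fun s _ => if_pos (empty_subset s)


lemma sum_restrict {A : Finset V} (g : Finset V → ℝ) (hg : ∀ s, g s ≠ 0 → s ⊆ A) :
    ∑ s : Finset V, g s = ∑ s ∈ A.powerset, g s := by
  refine (Finset.sum_subset (Finset.subset_univ _) fun s _ hs => ?_).symm
  by_contra h
  exact hs (Finset.mem_powerset.mpr (hg s h))

lemma sum_split {A B : Finset V} (hAB : Disjoint A B) (g : Finset V → ℝ)
    (hg : ∀ s, g s ≠ 0 → s ⊆ A ∪ B) :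
    ∑ s : Finset V, g s = ∑ s ∈ A.powerset, ∑ r ∈ B.powerset, g (s ∪ r) := by
  rw [sum_restrict g hg, ← Finset.sum_product']
  refine Finset.sum_nbij' (fun s => (s ∩ A, s ∩ B)) (fun sr => sr.1 ∪ sr.2) ?_ ?_ ?_ ?_ ?_
  · intro s hs
    rw [Finset.mem_powerset] at hs
    exact Finset.mem_product.mpr ⟨Finset.mem_powerset.mpr inter_subset_right,
      Finset.mem_powerset.mpr inter_subset_right⟩
  · intro sr hsr
    rw [Finset.mem_product, Finset.mem_powerset, Finset.mem_powerset] at hsr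
    exact Finset.mem_powerset.mpr (union_subset (hsr.1.trans subset_union_left)
      (hsr.2.trans subset_union_right))
  · intro s hs
    rw [Finset.mem_powerset] at hs
    show s ∩ A ∪ s ∩ B = s
    rw [← inter_union_distrib_left, inter_eq_left.mpr hs]
  · intro sr hsr
    rw [Finset.mem_product, Finset.mem_powerset, Finset.mem_powerset] at hsr
    have h1 : sr.1 ∩ A = sr.1 := inter_eq_left.mpr hsr.1
    have h2 : sr.2 ∩ A = ∅ := Finset.eq_empty_of_forall_notMem fun x hx =>
      Finset.disjoint_left.mp hAB (Finset.mem_inter.mp hx).2 (hsr.2 (Finset.mem_inter.mp hx).1)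
    have h3 : sr.1 ∩ B = ∅ := Finset.eq_empty_of_forall_notMem fun x hx =>
      Finset.disjoint_left.mp hAB (hsr.1 (Finset.mem_inter.mp hx).1) (Finset.mem_inter.mp hx).2
    have h4 : sr.2 ∩ B = sr.2 := inter_eq_left.mpr hsr.2
    show ((sr.1 ∪ sr.2) ∩ A, (sr.1 ∪ sr.2) ∩ B) = sr
    rw [union_inter_distrib_right, union_inter_distrib_right, h1, h2, h3, h4, union_empty,
      empty_union]
  · intro s hs
    rw [Finset.mem_powerset] at hs
    show g s = g (s ∩ A ∪ s ∩ B)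
    rw [← inter_union_distrib_left, inter_eq_left.mpr hs]
lemma inversion {A : Finset V} {w : Finset V → ℝ} (hw : ∀ s, w s ≠ 0 → s ⊆ A)
    {t : Finset V} (ht : t ⊆ A) :
    w t = ∑ u ∈ (A \ t).powerset, (-1 : ℝ) ^ u.card * mom w (t ∪ u) := by
  unfold mom
  simp only [Finset.mul_sum]
  rw [Finset.sum_comm]
  have key : ∀ s : Finset V,
      (∑ u ∈ (A \ t).powerset, (-1:ℝ) ^ u.card * (if t ∪ u ⊆ s then w s else 0)) =
      (if s = t then 1 else 0) * w s := by
    intro s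
    by_cases hws : w s = 0
    · simp [hws]
    have hsA : s ⊆ A := hw s hws
    by_cases hts : t ⊆ s
    · have step1 : ∀ u ∈ (A \ t).powerset,
          (-1:ℝ) ^ u.card * (if t ∪ u ⊆ s then w s else 0) =
          (if u ⊆ s then (-1:ℝ) ^ u.card else 0) * w s := by
        intro u _
        by_cases hu : u ⊆ s
        · rw [if_pos (union_subset hts hu), if_pos hu]
        · rw [if_neg (fun h => hu ((subset_union_right).trans h)), if_neg hu, zero_mul, mul_zero]
      rw [Finset.sum_congr rfl step1, ← Finset.sum_mul]
      congr 1
      rw [← Finset.sum_filter]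
      have hset : (A \ t).powerset.filter (fun u => u ⊆ s) = (s \ t).powerset := by
        ext u
        simp only [Finset.mem_filter, Finset.mem_powerset, Finset.subset_sdiff]
        exact ⟨fun ⟨⟨_, hd⟩, hus⟩ => ⟨hus, hd⟩, fun ⟨hus, hd⟩ => ⟨⟨hus.trans hsA, hd⟩, hus⟩⟩
      have hz : (∑ u ∈ (s \ t).powerset, (-1:ℝ) ^ u.card) = if s \ t = ∅ then 1 else 0 := by
        exact_mod_cast Finset.sum_powerset_neg_one_pow_card (x := s \ t)
      rw [hset, hz]
      by_cases hst : s = t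
      · simp [hst]
      · rw [if_neg hst, if_neg (fun h => hst (subset_antisymm
          (Finset.sdiff_eq_empty_iff_subset.mp h) hts))]
    · have hst : s ≠ t := fun h => hts (h ▸ subset_refl t)
      rw [if_neg hst, zero_mul]
      refine Finset.sum_eq_zero fun u _ => ?_
      rw [if_neg (fun h => hts ((subset_union_left).trans h)), mul_zero]
  rw [Finset.sum_congr rfl fun s _ => key s]
  simp only [ite_mul, one_mul, zero_mul]
  rw [Finset.sum_ite_eq' Finset.univ t w, if_pos (Finset.mem_univ t)]

lemma ext_of_mom {A : Finset V} {w w' : Finset V → ℝ}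
    (hw : ∀ s, w s ≠ 0 → s ⊆ A) (hw' : ∀ s, w' s ≠ 0 → s ⊆ A)
    (h : ∀ p ⊆ A, mom w p = mom w' p) : w = w' := by
  funext t
  by_cases ht : t ⊆ A
  · rw [inversion hw ht, inversion hw' ht]
    refine Finset.sum_congr rfl fun u hu => ?_
    rw [h (t ∪ u) (union_subset ht ((Finset.mem_powerset.mp hu).trans sdiff_subset))]
  · rw [of_not_not (fun h => ht (hw t h)), of_not_not (fun h => ht (hw' t h))]

lemma sum_pow_neg_two (s : Finset V) :
    ∑ p ∈ s.powerset, (-2:ℝ) ^ p.card = (-1) ^ s.card := by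
  induction s using Finset.induction with
  | empty => simp
  | insert _ _ ha ih =>
    rename_i a s
    rw [Finset.sum_powerset_insert ha, ih, Finset.card_insert_of_notMem ha]
    have : ∀ t ∈ s.powerset, (-2:ℝ) ^ (insert a t).card = -2 * (-2:ℝ) ^ t.card := by
      intro t ht
      rw [Finset.card_insert_of_notMem (fun h => ha ((Finset.mem_powerset.mp ht) h)),
        pow_succ]
      ring
    rw [Finset.sum_congr rfl this, ← Finset.mul_sum, ih, pow_succ]
    ring

lemma parity_indicator_sum (s : Finset V) :
    (∑ p ∈ s.powerset.filter (fun p => p.Nonempty), (-2:ℝ) ^ (p.card - 1)) =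
    if Even s.card then 0 else 1 := by
  have hfe : s.powerset.filter (fun p => p.Nonempty) = s.powerset.erase ∅ := by
    ext p
    simp [Finset.nonempty_iff_ne_empty, and_comm]
  have h1 : (∑ p ∈ s.powerset.filter (fun p => p.Nonempty), (-2:ℝ) ^ p.card) =
      (-1) ^ s.card - 1 := by
    rw [hfe, eq_sub_iff_add_eq, add_comm]
    have := Finset.add_sum_erase s.powerset (fun p => (-2:ℝ) ^ p.card)
      (Finset.empty_mem_powerset s)
    simpa using this.trans (sum_pow_neg_two s)
  have h2 : (∑ p ∈ s.powerset.filter (fun p => p.Nonempty), (-2:ℝ) ^ p.card) =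
      -2 * ∑ p ∈ s.powerset.filter (fun p => p.Nonempty), (-2:ℝ) ^ (p.card - 1) := by
    rw [Finset.mul_sum]
    refine Finset.sum_congr rfl fun p hp => ?_
    have hne : p.Nonempty := (Finset.mem_filter.mp hp).2
    have hc : p.card - 1 + 1 = p.card := Nat.sub_add_cancel (Finset.one_le_card.mpr hne)
    conv_lhs => rw [← hc, pow_succ]
    ring
  rw [h2] at h1
  by_cases he : Even s.card
  · rw [if_pos he]
    rw [he.neg_one_pow] at h1
    linarith
  · rw [if_neg he]
    rw [(Nat.not_even_iff_odd.mp he).neg_one_pow] at h1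
    linarith

lemma gsum (C s : Finset V) :
    (∑ q ∈ C.powerset.filter (fun p => p.Nonempty),
      (-2:ℝ) ^ (q.card - 1) * (if q ⊆ s then 1 else 0)) =
    if Even (s ∩ C).card then 0 else 1 := by
  have hsub : (s ∩ C).powerset.filter (fun p => p.Nonempty) ⊆
      C.powerset.filter (fun p => p.Nonempty) :=
    Finset.filter_subset_filter _ (Finset.powerset_mono.mpr inter_subset_right)
  calc (∑ q ∈ C.powerset.filter (fun p => p.Nonempty),
      (-2:ℝ) ^ (q.card - 1) * (if q ⊆ s then 1 else 0))
      = ∑ q ∈ (s ∩ C).powerset.filter (fun p => p.Nonempty),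
        (-2:ℝ) ^ (q.card - 1) * (if q ⊆ s then 1 else 0) := by
        refine (Finset.sum_subset hsub fun q hq hq' => ?_).symm
        have hqC : q ⊆ C := Finset.mem_powerset.mp (Finset.mem_filter.mp hq).1
        have hqs : ¬ q ⊆ s := by
          intro h
          exact hq' (Finset.mem_filter.mpr ⟨Finset.mem_powerset.mpr (subset_inter h hqC),
            (Finset.mem_filter.mp hq).2⟩)
        rw [if_neg hqs, mul_zero]
    _ = ∑ q ∈ (s ∩ C).powerset.filter (fun p => p.Nonempty), (-2:ℝ) ^ (q.card - 1) := by
        refine Finset.sum_congr rfl fun q hq => ?_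
        rw [if_pos ((Finset.mem_powerset.mp (Finset.mem_filter.mp hq).1).trans
          inter_subset_left), mul_one]
    _ = _ := parity_indicator_sum _

lemma prod_indicator (e s : Finset V) :
    (∏ v ∈ e, (if v ∈ s then (1:ℝ) else 0)) = if e ⊆ s then 1 else 0 := by
  by_cases h : e ⊆ s
  · rw [if_pos h]
    exact Finset.prod_eq_one fun v hv => if_pos (h hv)
  · rw [if_neg h]
    obtain ⟨v, hv, hvs⟩ := Finset.not_subset.mp h
    exact Finset.prod_eq_zero hv (if_neg hvs)

lemma glueStep {U C : Finset V} {ν μ : Finset V → ℝ}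
    (hν0 : ∀ s, 0 ≤ ν s) (hμ0 : ∀ s, 0 ≤ μ s)
    (hνs : ∀ s, ν s ≠ 0 → s ⊆ U) (hμs : ∀ s, μ s ≠ 0 → s ⊆ C)
    (hcons : marg (C ∩ U) ν = marg (C ∩ U) μ) :
    ∃ ν' : Finset V → ℝ, (∀ s, 0 ≤ ν' s) ∧ (∀ s, ν' s ≠ 0 → s ⊆ U ∪ C) ∧
      marg U ν' = ν ∧ marg C ν' = μ := by
  classical
  set D := C ∩ U with hD
  set m : Finset V → ℝ := marg D μ with hm
  set ν' : Finset V → ℝ :=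
    fun s' => if s' ⊆ U ∪ C then ν (s' ∩ U) * μ (s' ∩ C) / m (s' ∩ D) else 0 with hν'
  have hm0 : ∀ t, 0 ≤ m t := marg_nonneg hμ0
  have hν'0 : ∀ s, 0 ≤ ν' s := by
    intro s
    rw [hν']
    dsimp only
    split
    · exact div_nonneg (mul_nonneg (hν0 _) (hμ0 _)) (hm0 _)
    · exact le_rfl
  have hν's : ∀ s, ν' s ≠ 0 → s ⊆ U ∪ C := by
    intro s h
    rw [hν'] at h
    dsimp only at h
    by_contra hs
    rw [if_neg hs] at h
    exact h rfl
  have hdisj : Disjoint U (C \ U) := (sdiff_disjoint).symm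
  have hUC : U ∪ (C \ U) = U ∪ C := Finset.union_sdiff_self_eq_union
  have hrU : ∀ r : Finset V, r ⊆ C \ U → r ∩ U = ∅ := by
    intro r hr
    refine Finset.eq_empty_of_forall_notMem fun x hx => ?_
    have := Finset.mem_inter.mp hx
    exact (Finset.mem_sdiff.mp (hr this.1)).2 this.2
  have hrC : ∀ r : Finset V, r ⊆ C \ U → r ∩ C = r := by
    intro r hr
    exact inter_eq_left.mpr (hr.trans sdiff_subset)
  have hrD : ∀ r : Finset V, r ⊆ C \ U → r ∩ D = ∅ := by
    intro r hr
    rw [hD, ← inter_assoc, hrC r hr, hrU r hr]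
  have hsD : ∀ s : Finset V, s ⊆ U → s ∩ D = s ∩ C := by
    intro s hs
    rw [hD, inter_comm C U, ← inter_assoc, inter_eq_left.mpr hs]
  have htD : ∀ t : Finset V, t ⊆ C → t ∩ D = t ∩ U := by
    intro t ht
    rw [hD, ← inter_assoc, inter_eq_left.mpr ht]
  -- m as partial sums of μ
  have hmsum : ∀ t : Finset V, t ⊆ D →
      (∑ r ∈ (C \ U).powerset, μ (t ∪ r)) = m t := by
    intro t ht
    have hdisj2 : Disjoint D (C \ U) := (disjoint_sdiff_inter C U).symm
    have hDC : D ∪ (C \ U) = C := by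
      rw [hD]
      ext x
      simp only [Finset.mem_union, Finset.mem_inter, Finset.mem_sdiff]
      tauto
    have hsupp : ∀ s : Finset V, (if s ∩ D = t then μ s else 0) ≠ 0 → s ⊆ D ∪ (C \ U) := by
      intro s h
      rw [hDC]
      by_cases hμ : μ s = 0
      · simp [hμ] at h
      · exact hμs s hμ
    rw [hm]
    show _ = ∑ s : Finset V, if s ∩ D = t then μ s else 0
    rw [sum_split hdisj2 _ hsupp]
    have hterm : ∀ s ∈ D.powerset, ∀ r ∈ (C \ U).powerset,
        (if (s ∪ r) ∩ D = t then μ (s ∪ r) else 0) = if s = t then μ (s ∪ r) else 0 := by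
      intro s hs r hr
      rw [Finset.mem_powerset] at hs hr
      have : (s ∪ r) ∩ D = s := by
        rw [union_inter_distrib_right, inter_eq_left.mpr hs, hrD r hr, union_empty]
      rw [this]
    rw [Finset.sum_congr rfl fun s hs => Finset.sum_congr rfl fun r hr => hterm s hs r hr]
    rw [Finset.sum_congr rfl fun s (hs : s ∈ D.powerset) =>
      (ite_sum (P := s = t) ((C \ U).powerset) fun r => μ (s ∪ r)).symm]
    rw [Finset.sum_ite_eq' D.powerset t (fun s => ∑ r ∈ (C \ U).powerset, μ (s ∪ r)),
      if_pos (Finset.mem_powerset.mpr ht)]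
  -- marginal on U
  have hmargU : marg U ν' = ν := by
    funext t
    by_cases htU : t ⊆ U
    swap
    · have h1 : marg U ν' t = 0 := by
        by_contra h; exact htU (marg_supp h)
      have h2 : ν t = 0 := by
        by_contra h; exact htU (hνs t h)
      rw [h1, h2]
    show (∑ s' : Finset V, if s' ∩ U = t then ν' s' else 0) = ν t
    have hsupp : ∀ s : Finset V, (if s ∩ U = t then ν' s else 0) ≠ 0 → s ⊆ U ∪ (C \ U) := by
      intro s h
      rw [hUC]
      by_cases hz : ν' s = 0
      · simp [hz] at h
      · exact hν's s hz
    rw [sum_split hdisj _ hsupp]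
    have hterm : ∀ s ∈ U.powerset, ∀ r ∈ (C \ U).powerset,
        (if (s ∪ r) ∩ U = t then ν' (s ∪ r) else 0) = if s = t then ν' (s ∪ r) else 0 := by
      intro s hs r hr
      rw [Finset.mem_powerset] at hs hr
      have : (s ∪ r) ∩ U = s := by
        rw [union_inter_distrib_right, inter_eq_left.mpr hs, hrU r hr, union_empty]
      rw [this]
    rw [Finset.sum_congr rfl fun s hs => Finset.sum_congr rfl fun r hr => hterm s hs r hr]
    rw [Finset.sum_congr rfl fun s (hs : s ∈ U.powerset) =>
      (ite_sum (P := s = t) ((C \ U).powerset) fun r => ν' (s ∪ r)).symm]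
    rw [Finset.sum_ite_eq' U.powerset t (fun s => ∑ r ∈ (C \ U).powerset, ν' (s ∪ r)),
      if_pos (Finset.mem_powerset.mpr htU)]
    have hform : ∀ r ∈ (C \ U).powerset, ν' (t ∪ r) =
        μ ((t ∩ C) ∪ r) * (ν t / m (t ∩ C)) := by
      intro r hr
      rw [Finset.mem_powerset] at hr
      have hsub : t ∪ r ⊆ U ∪ C :=
        union_subset (htU.trans subset_union_left)
          ((hr.trans sdiff_subset).trans subset_union_right)
      have e1 : (t ∪ r) ∩ U = t := by
        rw [union_inter_distrib_right, inter_eq_left.mpr htU, hrU r hr, union_empty]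
      have e2 : (t ∪ r) ∩ C = (t ∩ C) ∪ r := by
        rw [union_inter_distrib_right, hrC r hr]
      have e3 : (t ∪ r) ∩ D = t ∩ C := by
        rw [union_inter_distrib_right, hrD r hr, union_empty, hsD t htU]
      rw [hν']
      dsimp only
      rw [if_pos hsub, e1, e2, e3]
      ring
    rw [Finset.sum_congr rfl hform, ← Finset.sum_mul]
    have htCD : t ∩ C ⊆ D := by
      rw [hD]
      exact subset_inter inter_subset_right (inter_subset_left.trans htU)
    rw [hmsum (t ∩ C) htCD]
    by_cases hz : m (t ∩ C) = 0
    · have hνt : ν t = 0 := by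
        have h1 : ν t ≤ marg D ν (t ∩ D) := single_le_marg hν0 t
        rw [hcons, hsD t htU, hz] at h1
        exact le_antisymm h1 (hν0 t)
      rw [hz, hνt]
      simp
    · rw [mul_comm]
      exact div_mul_cancel₀ _ hz
  -- marginal on C
  have hmargC : marg C ν' = μ := by
    funext t
    by_cases htC : t ⊆ C
    swap
    · have h1 : marg C ν' t = 0 := by
        by_contra h; exact htC (marg_supp h)
      have h2 : μ t = 0 := by
        by_contra h; exact htC (hμs t h)
      rw [h1, h2]
    show (∑ s' : Finset V, if s' ∩ C = t then ν' s' else 0) = μ t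
    have hsupp : ∀ s : Finset V, (if s ∩ C = t then ν' s else 0) ≠ 0 → s ⊆ U ∪ (C \ U) := by
      intro s h
      rw [hUC]
      by_cases hz : ν' s = 0
      · simp [hz] at h
      · exact hν's s hz
    rw [sum_split hdisj _ hsupp]
    have htUC : t \ U ⊆ C \ U := sdiff_subset_sdiff htC (le_refl U)
    have hterm : ∀ s ∈ U.powerset, ∀ r ∈ (C \ U).powerset,
        (if (s ∪ r) ∩ C = t then ν' (s ∪ r) else 0) =
        if r = t \ U then (if s ∩ C = t ∩ U then ν' (s ∪ r) else 0) else 0 := by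
      intro s hs r hr
      rw [Finset.mem_powerset] at hs hr
      have hcond : (s ∪ r) ∩ C = t ↔ (r = t \ U ∧ s ∩ C = t ∩ U) := by
        constructor
        · intro h
          have h2 : (s ∪ r) ∩ C = (s ∩ C) ∪ r := by
            rw [union_inter_distrib_right, hrC r hr]
          rw [h2] at h
          have hsCU : s ∩ C ⊆ U := inter_subset_left.trans hs
          constructor
          · ext x
            constructor
            · intro hxr
              have hxt : x ∈ t := by rw [← h]; exact Finset.mem_union_right _ hxr
              exact Finset.mem_sdiff.mpr ⟨hxt, (Finset.mem_sdiff.mp (hr hxr)).2⟩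
            · intro hx
              obtain ⟨hxt, hxU⟩ := Finset.mem_sdiff.mp hx
              rw [← h] at hxt
              rcases Finset.mem_union.mp hxt with hx1 | hx1
              · exact absurd (hsCU hx1) hxU
              · exact hx1
          · ext x
            constructor
            · intro hx
              refine Finset.mem_inter.mpr ⟨?_, hsCU hx⟩
              rw [← h]; exact Finset.mem_union_left _ hx
            · intro hx
              obtain ⟨hxt, hxU⟩ := Finset.mem_inter.mp hx
              rw [← h] at hxt
              rcases Finset.mem_union.mp hxt with hx1 | hx1
              · exact hx1
              · exact absurd hxU (Finset.mem_sdiff.mp (hr hx1)).2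
        · intro ⟨h1, h2⟩
          rw [union_inter_distrib_right, hrC r hr, h2, h1]
          ext x
          simp only [Finset.mem_union, Finset.mem_inter, Finset.mem_sdiff]
          by_cases hxU : x ∈ U <;> simp [hxU] <;> tauto
      by_cases h : (s ∪ r) ∩ C = t
      · obtain ⟨h1, h2⟩ := hcond.mp h
        rw [if_pos h, if_pos h1, if_pos h2]
      · rw [if_neg h]
        by_cases h1 : r = t \ U
        · by_cases h2 : s ∩ C = t ∩ U
          · exact absurd (hcond.mpr ⟨h1, h2⟩) h
          · rw [if_pos h1, if_neg h2]
        · rw [if_neg h1]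
    rw [Finset.sum_congr rfl fun s hs => Finset.sum_congr rfl fun r hr => hterm s hs r hr]
    rw [Finset.sum_congr rfl fun s (_ : s ∈ U.powerset) =>
      Finset.sum_ite_eq' ((C \ U).powerset)  (t \ U)
        (fun r => if s ∩ C = t ∩ U then ν' (s ∪ r) else 0)]
    rw [Finset.sum_congr rfl fun s (_ : s ∈ U.powerset) =>
      if_pos (Finset.mem_powerset.mpr htUC)]
    have hform : ∀ s ∈ U.powerset,
        (if s ∩ C = t ∩ U then ν' (s ∪ (t \ U)) else 0) =
        (if s ∩ D = t ∩ U then ν s else 0) * (μ t / m (t ∩ U)) := by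
      intro s hs
      rw [Finset.mem_powerset] at hs
      rw [hsD s hs]
      by_cases hc : s ∩ C = t ∩ U
      · rw [if_pos hc, if_pos hc]
        have hsub : s ∪ (t \ U) ⊆ U ∪ C :=
          union_subset (hs.trans subset_union_left)
            ((htUC.trans sdiff_subset).trans subset_union_right)
        have e1 : (s ∪ (t \ U)) ∩ U = s := by
          rw [union_inter_distrib_right, inter_eq_left.mpr hs, hrU _ htUC, union_empty]
        have e2 : (s ∪ (t \ U)) ∩ C = t := by
          rw [union_inter_distrib_right, hrC _ htUC, hc]
          ext x
          simp only [Finset.mem_union, Finset.mem_inter, Finset.mem_sdiff]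
          by_cases hxU : x ∈ U <;> simp [hxU] <;> tauto
        have e3 : (s ∪ (t \ U)) ∩ D = t ∩ U := by
          rw [union_inter_distrib_right, hrD _ htUC, union_empty, hsD s hs, hc]
        rw [hν']
        dsimp only
        rw [if_pos hsub, e1, e2, e3]
        ring
      · rw [if_neg hc, if_neg hc, zero_mul]
    rw [Finset.sum_congr rfl hform, ← Finset.sum_mul]
    have hrestrict : (∑ s : Finset V, if s ∩ D = t ∩ U then ν s else 0) =
        ∑ s ∈ U.powerset, if s ∩ D = t ∩ U then ν s else 0 := by
      refine sum_restrict _ fun s h => ?_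
      by_cases hz : ν s = 0
      · simp [hz] at h
      · exact hνs s hz
    rw [← hrestrict]
    have : (∑ s : Finset V, if s ∩ D = t ∩ U then ν s else 0) = m (t ∩ U) := by
      show marg D ν (t ∩ U) = m (t ∩ U)
      rw [hcons]
    rw [this]
    by_cases hz : m (t ∩ U) = 0
    · have hμt : μ t = 0 := by
        have h1 : μ t ≤ marg D μ (t ∩ D) := single_le_marg hμ0 t
        rw [← hm, htD t htC, hz] at h1
        exact le_antisymm h1 (hμ0 t)
      rw [hz, hμt]
      simp
    · rw [mul_comm, div_mul_cancel₀ _ hz]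
  exact ⟨ν', hν'0, hν's, hmargU, hmargC⟩
lemma marg_empty (w : Finset V → ℝ) (t : Finset V) :
    marg ∅ w t = if t = ∅ then ∑ s : Finset V, w s else 0 := by
  unfold marg
  by_cases ht : t = ∅
  · subst ht; simp
  · rw [if_neg ht]
    refine Finset.sum_eq_zero fun s _ => if_neg fun h => ?_
    rw [inter_empty] at h
    exact ht h.symm

lemma marg_consistent {C C' : Finset V} {z : Finset V → ℝ} {μ μ' : Finset V → ℝ}
    (hμs : ∀ s, μ s ≠ 0 → s ⊆ C) (hμ's : ∀ s, μ' s ≠ 0 → s ⊆ C')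
    (hm : ∑ s : Finset V, μ s = 1) (hm' : ∑ s : Finset V, μ' s = 1)
    (hmom : ∀ q : Finset V, q.Nonempty → q ⊆ C → mom μ q = z q)
    (hmom' : ∀ q : Finset V, q.Nonempty → q ⊆ C' → mom μ' q = z q) :
    marg (C ∩ C') μ = marg (C ∩ C') μ' := by
  refine ext_of_mom (A := C ∩ C') (fun s h => marg_supp h) (fun s h => marg_supp h) ?_
  intro p hp
  rw [mom_marg hp, mom_marg hp]
  rcases Finset.eq_empty_or_nonempty p with rfl | hpne
  · rw [mom_empty, mom_empty, hm, hm']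
  · rw [hmom p hpne (hp.trans inter_subset_left), hmom' p hpne (hp.trans inter_subset_right)]

lemma glue_exists {m : ℕ} (p : Fin m → Finset V) (μ : Fin m → Finset V → ℝ)
    (hμ0 : ∀ i s, 0 ≤ μ i s) (hμsupp : ∀ i s, μ i s ≠ 0 → s ⊆ p i)
    (hmass : ∀ i, ∑ s : Finset V, μ i s = 1)
    (hcons : ∀ i j, marg (p i ∩ p j) (μ i) = marg (p i ∩ p j) (μ j))
    (hrip : ∀ k : Fin m, 0 < (k : ℕ) →
      ∃ j : Fin m, j < k ∧
        p k ∩ (Finset.univ.filter fun i : Fin m => i < k).biUnion p ⊆ p j) :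
    ∃ ν : Finset V → ℝ, (∀ s, 0 ≤ ν s) ∧ (∑ s : Finset V, ν s) = 1 ∧
      ∀ i, marg (p i) ν = μ i := by
  classical
  set U : ℕ → Finset V := fun n => (Finset.univ.filter fun i : Fin m => (i : ℕ) < n).biUnion p
    with hU
  have key : ∀ n, n ≤ m → ∃ ν : Finset V → ℝ, (∀ s, 0 ≤ ν s) ∧ (∀ s, ν s ≠ 0 → s ⊆ U n) ∧
      (∑ s : Finset V, ν s) = 1 ∧ ∀ i : Fin m, (i : ℕ) < n → marg (p i) ν = μ i := by
    intro n
    induction n with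
    | zero =>
      intro _
      refine ⟨fun s => if s = ∅ then 1 else 0, ?_, ?_, ?_, ?_⟩
      · intro s; dsimp only; split <;> norm_num
      · intro s h
        dsimp only at h
        by_cases hs : s = ∅
        · subst hs; exact Finset.empty_subset _
        · rw [if_neg hs] at h; exact absurd rfl h
      · simp
      · intro i hi; exact absurd hi (Nat.not_lt_zero _)
    | succ n ih =>
      intro hn1
      have hn : n < m := hn1
      obtain ⟨ν, hν0, hνs, hνmass, hνmarg⟩ := ih (Nat.le_of_succ_le hn1)
      set k : Fin m := ⟨n, hn⟩ with hk
      have hUn : U n = (Finset.univ.filter fun i : Fin m => i < k).biUnion p := rfl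
      have hcons' : marg (p k ∩ U n) ν = marg (p k ∩ U n) (μ k) := by
        by_cases hn0 : n = 0
        · have hU0 : U n = ∅ := by
            subst hn0; rw [hU]; simp
          rw [hU0, inter_empty]
          funext t
          rw [marg_empty, marg_empty, hνmass, hmass k]
        · obtain ⟨j, hjk, hsub⟩ := hrip k (Nat.pos_of_ne_zero hn0)
          have hsub' : p k ∩ U n ⊆ p j := by rw [hUn]; exact hsub
          have h1 : marg (p k ∩ U n) ν = marg (p k ∩ U n) (μ j) := by
            rw [← hνmarg j hjk, marg_marg hsub']
          have h2 : p k ∩ U n ⊆ p k ∩ p j := subset_inter inter_subset_left hsub'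
          have h3 : marg (p k ∩ U n) (μ j) = marg (p k ∩ U n) (μ k) := by
            rw [← marg_marg h2 (μ j), ← marg_marg h2 (μ k), hcons k j]
          rw [h1, h3]
      obtain ⟨ν', h'0, h's, hmU, hmC⟩ := glueStep hν0 (hμ0 k) hνs (hμsupp k) hcons'
      have hUsucc : U (n + 1) = U n ∪ p k := by
        rw [hU]
        dsimp only
        have hins : (Finset.univ.filter fun i : Fin m => (i : ℕ) < n + 1) =
            insert k (Finset.univ.filter fun i : Fin m => (i : ℕ) < n) := by
          ext i
          simp only [Finset.mem_filter, Finset.mem_insert, Finset.mem_univ, true_and]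
          rw [Nat.lt_succ_iff_lt_or_eq]
          constructor
          · rintro (h | h)
            · exact Or.inr h
            · exact Or.inl (Fin.ext h)
          · rintro (h | h)
            · subst h; exact Or.inr rfl
            · exact Or.inl h
        rw [hins, Finset.biUnion_insert, union_comm]
      refine ⟨ν', h'0, ?_, ?_, ?_⟩
      · intro s hs
        rw [hUsucc]
        exact h's s hs
      · have hmm := marg_mass (U n) ν'
        rw [hmU] at hmm
        rw [← hmm, hνmass]
      · intro i hi
        rcases Nat.lt_succ_iff_lt_or_eq.mp hi with h | h
        · have hip : p i ⊆ U n := by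
            rw [hU]
            exact Finset.subset_biUnion_of_mem p (by simp [h])
          rw [← hνmarg i h, ← hmU, marg_marg hip]
        · have hik : i = k := Fin.ext h
          rw [hik, hmC]
  obtain ⟨ν, h0, _, hmass', hmarg⟩ := key m le_rfl
  exact ⟨ν, h0, hmass', fun i => hmarg i i.2⟩
lemma exists_cliqueDist {C : Finset V} {z : Finset V → ℝ}
    (hz : z ∈ convexHull ℝ (MultilinearSet C (C.powerset.filter fun e => 2 ≤ e.card)))
    (hp : parityForm C z = 0) :
    ∃ μ : Finset V → ℝ, (∀ s, 0 ≤ μ s) ∧ (∀ s, μ s ≠ 0 → s ⊆ C) ∧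
      (∑ s : Finset V, μ s) = 1 ∧ (∀ s, μ s ≠ 0 → Even s.card) ∧
      ∀ q : Finset V, q.Nonempty → q ⊆ C → mom μ q = z q := by
  classical
  rw [_root_.convexHull_eq] at hz
  obtain ⟨ι, T, w, y, hw0, hw1, hyS, hcm⟩ := hz
  have hzsum : ∀ q : Finset V, z q = ∑ i ∈ T.attach, w i.1 * y i.1 q := by
    intro q
    rw [← hcm, Finset.centerMass_eq_of_sum_1 _ _ hw1]
    rw [← Finset.sum_attach T (fun i => w i • y i)]
    rw [Finset.sum_apply]
    exact Finset.sum_congr rfl fun i _ => rfl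
  choose x hx0 hx1 hx2 using fun (i : {i // i ∈ T}) => hyS i.1 i.2
  set Sf : {i // i ∈ T} → Finset V := fun i => C.filter fun v => x i v = 1 with hSf
  have hSfC : ∀ i, Sf i ⊆ C := fun i => Finset.filter_subset _ _
  have hy_ind : ∀ (i : {i // i ∈ T}) (q : Finset V), q.Nonempty → q ⊆ C →
      y i.1 q = if q ⊆ Sf i then 1 else 0 := by
    intro i q hqne hqC
    have hA : y i.1 q = ∏ v ∈ q, x i v := by
      by_cases h2 : 2 ≤ q.card
      · exact hx2 i q (Finset.mem_filter.mpr ⟨Finset.mem_powerset.mpr hqC, h2⟩)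
      · have hle : q.card ≤ 1 := Nat.lt_succ_iff.mp (not_le.mp h2)
        have h1 : q.card = 1 := le_antisymm hle (Finset.one_le_card.mpr hqne)
        obtain ⟨v, rfl⟩ := Finset.card_eq_one.mp h1
        rw [Finset.prod_singleton]
        exact hx1 i v (hqC (Finset.mem_singleton_self v))
    rw [hA]
    by_cases hqS : q ⊆ Sf i
    · rw [if_pos hqS]
      exact Finset.prod_eq_one fun v hv => (Finset.mem_filter.mp (hqS hv)).2
    · rw [if_neg hqS]
      obtain ⟨v, hv, hvS⟩ := Finset.not_subset.mp hqS
      have hvC : v ∈ C := hqC hv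
      have hx : x i v = 0 := by
        rcases hx0 i v hvC with h | h
        · exact h
        · exact absurd (Finset.mem_filter.mpr ⟨hvC, h⟩) hvS
      exact Finset.prod_eq_zero hv hx
  set μ : Finset V → ℝ := fun t => ∑ i ∈ T.attach, if Sf i = t then w i.1 else 0 with hμ
  have hparity : ∀ i ∈ T.attach, w i.1 * (if Even (Sf i).card then (0:ℝ) else 1) = 0 := by
    have hchain : parityForm C z =
        ∑ i ∈ T.attach, w i.1 * (if Even (Sf i).card then (0:ℝ) else 1) := by
      unfold parityForm
      calc (∑ q ∈ C.powerset.filter fun p => p.Nonempty, (-2:ℝ) ^ (q.card - 1) * z q)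
          = ∑ q ∈ C.powerset.filter (fun p => p.Nonempty),
            ∑ i ∈ T.attach, (-2:ℝ) ^ (q.card - 1) * (w i.1 * y i.1 q) := by
            refine Finset.sum_congr rfl fun q hq => ?_
            rw [hzsum q, Finset.mul_sum]
        _ = ∑ i ∈ T.attach, ∑ q ∈ C.powerset.filter (fun p => p.Nonempty),
            (-2:ℝ) ^ (q.card - 1) * (w i.1 * y i.1 q) := Finset.sum_comm
        _ = ∑ i ∈ T.attach, w i.1 * (if Even (Sf i).card then (0:ℝ) else 1) := by
            refine Finset.sum_congr rfl fun i _ => ?_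
            have hterm : ∀ q ∈ C.powerset.filter (fun p => p.Nonempty),
                (-2:ℝ) ^ (q.card - 1) * (w i.1 * y i.1 q) =
                w i.1 * ((-2:ℝ) ^ (q.card - 1) * (if q ⊆ Sf i then 1 else 0)) := by
              intro q hq
              have hqf := Finset.mem_filter.mp hq
              rw [hy_ind i q hqf.2 (Finset.mem_powerset.mp hqf.1)]
              ring
            rw [Finset.sum_congr rfl hterm, ← Finset.mul_sum, gsum C (Sf i),
              inter_eq_left.mpr (hSfC i)]
    rw [hchain] at hp
    intro i hi
    refine (Finset.sum_eq_zero_iff_of_nonneg ?_).mp hp i hi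
    intro j _
    by_cases h : Even (Sf j).card
    · simp [h]
    · simp [h, hw0 j.1 j.2]
  refine ⟨μ, ?_, ?_, ?_, ?_, ?_⟩
  · intro s
    refine Finset.sum_nonneg fun i _ => ?_
    split
    · exact hw0 i.1 i.2
    · exact le_rfl
  · intro s h
    obtain ⟨i, _, hne⟩ := Finset.exists_ne_zero_of_sum_ne_zero h
    by_cases he : Sf i = s
    · exact he ▸ hSfC i
    · rw [if_neg he] at hne; exact absurd rfl hne
  · rw [hμ]
    dsimp only
    rw [Finset.sum_comm]
    rw [Finset.sum_congr rfl fun i _ =>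
      Finset.sum_ite_eq Finset.univ (Sf i) (fun _ => w i.1)]
    rw [Finset.sum_congr rfl fun i _ => if_pos (Finset.mem_univ (Sf i))]
    rw [Finset.sum_attach T (fun i => w i)]
    exact hw1
  · intro s hs
    by_contra hodd
    apply hs
    rw [hμ]
    dsimp only
    refine Finset.sum_eq_zero fun i hi => ?_
    by_cases he : Sf i = s
    · rw [if_pos he]
      have h0 := hparity i hi
      rw [he, if_neg hodd, mul_one] at h0
      exact h0
    · rw [if_neg he]
  · intro q hqne hqC
    unfold mom
    rw [hμ]
    dsimp only
    simp only [ite_sum]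
    rw [Finset.sum_comm]
    have hcollapse : ∀ i : {i // i ∈ T},
        (∑ s : Finset V, if q ⊆ s then (if Sf i = s then w i.1 else 0) else 0) =
        if q ⊆ Sf i then w i.1 else 0 := by
      intro i
      rw [Finset.sum_eq_single (Sf i)]
      · simp
      · intro b _ hb
        simp [Ne.symm hb]
      · intro h; exact absurd (Finset.mem_univ _) h
    rw [Finset.sum_congr rfl fun i _ => hcollapse i, hzsum q]
    refine Finset.sum_congr rfl fun i _ => ?_
    rw [hy_ind i q hqne hqC, mul_ite, mul_one, mul_zero]
lemma parityForm_affine (C : Finset V) (z1 z2 : Finset V → ℝ) (a b : ℝ) :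
    parityForm C (a • z1 + b • z2) = a * parityForm C z1 + b * parityForm C z2 := by
  unfold parityForm
  rw [Finset.mul_sum, Finset.mul_sum, ← Finset.sum_add_distrib]
  refine Finset.sum_congr rfl fun q _ => ?_
  simp only [Pi.add_apply, Pi.smul_apply, smul_eq_mul]
  ring

end PG

/-- if the family `𝒞` of maximal cliques has the running intersection property,
then the convex hull `MP^e(G)` of the parity-constrained multilinear set of the UGM hypergraph
equals the intersection over `C ∈ 𝒞` of `MP(G_C) ∩ H_C`. -/
theorem parity_constrained_clique_decomposition {V : Type} [Fintype V] [DecidableEq V]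
    (𝒞 : Finset (Finset V))
    (hmax : ∀ C ∈ 𝒞, ∀ C' ∈ 𝒞, C ⊆ C' → C = C')
    (hRIP : HasRIP 𝒞) :
    convexHull ℝ {z ∈ MultilinearSet (𝒞.sup id) (ugmEdges 𝒞) |
        ∀ C ∈ 𝒞, parityForm C z = 0} =
      {z : Finset V → ℝ | ∀ C ∈ 𝒞,
        z ∈ convexHull ℝ (MultilinearSet C (C.powerset.filter fun e => 2 ≤ e.card)) ∧
          parityForm C z = 0} := by
  classical
  open PG in
  apply Set.Subset.antisymm
  · refine convexHull_min ?_ ?_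
    · intro z hz C hC
      obtain ⟨hms, hpar⟩ := hz
      refine ⟨subset_convexHull ℝ _ ?_, hpar C hC⟩
      obtain ⟨x, hx0, hx1, hx2⟩ := hms
      have hCsup : C ⊆ 𝒞.sup id := Finset.le_sup (f := id) hC
      refine ⟨x, fun v hv => hx0 v (hCsup hv), fun v hv => hx1 v (hCsup hv), ?_⟩
      intro e he
      refine hx2 e ?_
      exact Finset.mem_biUnion.mpr ⟨C, hC, he⟩
    · intro z1 hz1 z2 hz2 a b ha hb hab
      intro C hC
      constructor
      · exact (convex_convexHull ℝ _) (hz1 C hC).1 (hz2 C hC).1 ha hb hab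
      · rw [PG.parityForm_affine, (hz1 C hC).2, (hz2 C hC).2]
        ring
  · intro z hz
    obtain ⟨m, p, hpF, hsurj, hinj, hrip⟩ := hRIP
    choose μ hμ0 hμsupp hμmass hμeven hμmom using
      fun i : Fin m => PG.exists_cliqueDist (hz (p i) (hpF i)).1 (hz (p i) (hpF i)).2
    have hcons : ∀ i j, PG.marg (p i ∩ p j) (μ i) = PG.marg (p i ∩ p j) (μ j) :=
      fun i j => PG.marg_consistent (hμsupp i) (hμsupp j) (hμmass i) (hμmass j)
        (hμmom i) (hμmom j)
    obtain ⟨ν, hν0, hνmass, hνmarg⟩ := PG.glue_exists p μ hμ0 hμsupp hμmass hcons hrip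
    set F : Finset V → (Finset V → ℝ) := fun s q =>
      if q.Nonempty ∧ ∃ C ∈ 𝒞, q ⊆ C then (if q ⊆ s then 1 else 0) else z q with hF
    have heven : ∀ s : Finset V, ν s ≠ 0 → ∀ C ∈ 𝒞, Even (s ∩ C).card := by
      intro s hs C hC
      obtain ⟨i, rfl⟩ := hsurj C hC
      have h1 : ν s ≤ PG.marg (p i) ν (s ∩ p i) := PG.single_le_marg hν0 s
      rw [hνmarg i] at h1
      refine hμeven i (s ∩ p i) ?_
      intro h0
      rw [h0] at h1
      exact hs (le_antisymm h1 (hν0 s))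
    have hpts : ∀ s : Finset V, ν s ≠ 0 →
        F s ∈ {z ∈ MultilinearSet (𝒞.sup id) (ugmEdges 𝒞) | ∀ C ∈ 𝒞, parityForm C z = 0} := by
      intro s hs
      constructor
      · refine ⟨fun v => if v ∈ s then (1:ℝ) else 0, ?_, ?_, ?_⟩
        · intro v _
          by_cases h : v ∈ s
          · exact Or.inr (if_pos h)
          · exact Or.inl (if_neg h)
        · intro v hv
          obtain ⟨C, hC, hvC⟩ := Finset.mem_sup.mp hv
          have hcond : (({v} : Finset V).Nonempty ∧ ∃ C ∈ 𝒞, ({v} : Finset V) ⊆ C) :=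
            ⟨Finset.singleton_nonempty v, C, hC, Finset.singleton_subset_iff.mpr hvC⟩
          rw [hF]
          dsimp only
          rw [if_pos hcond]
          by_cases h : v ∈ s
          · rw [if_pos (Finset.singleton_subset_iff.mpr h), if_pos h]
          · rw [if_neg (fun hh => h (Finset.singleton_subset_iff.mp hh)), if_neg h]
        · intro e he
          obtain ⟨C, hC, he2⟩ := Finset.mem_biUnion.mp he
          obtain ⟨heC, hecard⟩ := Finset.mem_filter.mp he2
          have hene : e.Nonempty := Finset.card_pos.mp (lt_of_lt_of_le two_pos hecard)
          have hcond : (e.Nonempty ∧ ∃ C ∈ 𝒞, e ⊆ C) :=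
            ⟨hene, C, hC, Finset.mem_powerset.mp heC⟩
          rw [hF]
          dsimp only
          rw [if_pos hcond, PG.prod_indicator]
      · intro C hC
        unfold parityForm
        have hterm : ∀ q ∈ C.powerset.filter (fun p => p.Nonempty),
            (-2:ℝ) ^ (q.card - 1) * F s q =
            (-2:ℝ) ^ (q.card - 1) * (if q ⊆ s then 1 else 0) := by
          intro q hq
          obtain ⟨hq1, hq2⟩ := Finset.mem_filter.mp hq
          have hcond : (q.Nonempty ∧ ∃ C' ∈ 𝒞, q ⊆ C') :=
            ⟨hq2, C, hC, Finset.mem_powerset.mp hq1⟩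
          rw [hF]
          dsimp only
          rw [if_pos hcond]
        rw [Finset.sum_congr rfl hterm, PG.gsum C s, if_pos (heven s hs C hC)]
    have hsum1 : (∑ s ∈ Finset.univ.filter (fun s : Finset V => ν s ≠ 0), ν s) = 1 := by
      rw [Finset.sum_filter_ne_zero, hνmass]
    have hmem := Finset.centerMass_mem_convexHull
      (Finset.univ.filter (fun s : Finset V => ν s ≠ 0))
      (fun s hs => hν0 s) (by rw [hsum1]; exact one_pos)
      (fun s hs => hpts s (Finset.mem_filter.mp hs).2)
    have hev : (Finset.univ.filter (fun s : Finset V => ν s ≠ 0)).centerMass ν F = z := by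
      rw [Finset.centerMass_eq_of_sum_1 _ _ hsum1]
      have hext : (∑ s ∈ Finset.univ.filter (fun s : Finset V => ν s ≠ 0), ν s • F s) =
          ∑ s : Finset V, ν s • F s := by
        refine Finset.sum_subset (Finset.filter_subset _ _) fun s _ hs => ?_
        have h0 : ν s = 0 := of_not_not (by simpa using hs)
        rw [h0, zero_smul]
      rw [hext]
      funext q
      rw [Finset.sum_apply]
      simp only [Pi.smul_apply, smul_eq_mul]
      by_cases hq : q.Nonempty ∧ ∃ C ∈ 𝒞, q ⊆ C
      · obtain ⟨hqne, C, hC, hqC⟩ := hq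
        obtain ⟨i, rfl⟩ := hsurj C hC
        have hstep : (∑ s : Finset V, ν s * F s q) = PG.mom ν q := by
          unfold PG.mom
          refine Finset.sum_congr rfl fun s _ => ?_
          rw [hF]
          dsimp only
          rw [if_pos ⟨hqne, p i, hC, hqC⟩]
          by_cases h : q ⊆ s
          · rw [if_pos h, if_pos h, mul_one]
          · rw [if_neg h, if_neg h, mul_zero]
        rw [hstep, ← PG.mom_marg hqC ν, hνmarg i, hμmom i q hqne hqC]
      · have hfree : ∀ s, F s q = z q := by
          intro s
          rw [hF]
          dsimp only
          rw [if_neg hq]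
        calc (∑ s : Finset V, ν s * F s q) = ∑ s : Finset V, ν s * z q := by
              exact Finset.sum_congr rfl fun s _ => by rw [hfree s]
          _ = (∑ s : Finset V, ν s) * z q := by rw [Finset.sum_mul]
          _ = z q := by rw [hνmass, one_mul]
    rw [hev] at hmem
    exact hmem
end
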